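/- arXiv:2303.00618 — 9 statements merged into one kernel-verified Lean document; each statement's English description precedes it below -/
import Mathlib

section
/- Let ψ : ℝ^N → ℂ^d be a map whose values are unit vectors, and suppose L > 0 is a Lipschitz bound of ψ with respect to the ∞-norm on ℝ^N, i.e. ‖ψ(ε) − ψ(ε′)‖₂ ≤ L·‖ε − ε′‖_∞ for all ε, ε′ ∈ ℝ^N. Then for any ε̄ ≥ 0 and any ε ∈ ℝ^N with ‖ε‖_∞ ≤ ε̄, it holds that |⟨ψ(ε), ψ(0)⟩| ≥ 1 − L²·ε̄²/2. -/
set_option autoImplicit false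

/-- Theorem 1 of the paper: if `L > 0` is a Lipschitz bound of the unit-vector
valued map `ψ : ℝ^N → ℂ^d` (with the ∞-norm on `ℝ^N`, which is the default norm on `Fin N → ℝ`),
then for any `ε̄ ≥ 0` and any `ε` with `‖ε‖_∞ ≤ ε̄`, the fidelity `|⟨ψ(ε), ψ(0)⟩|` is at least
`1 − L²ε̄²/2`. -/
theorem worst_case_fidelity_of_lipschitz {N d : ℕ}
    (ψ : (Fin N → ℝ) → EuclideanSpace ℂ (Fin d)) (hψ : ∀ ε, ‖ψ ε‖ = 1)
    (L : ℝ) (hL : 0 < L)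
    (hLip : ∀ ε ε' : Fin N → ℝ, ‖ψ ε - ψ ε'‖ ≤ L * ‖ε - ε'‖)
    (εbar : ℝ) (hεbar : 0 ≤ εbar) (ε : Fin N → ℝ) (hε : ‖ε‖ ≤ εbar) :
    1 - L ^ 2 * εbar ^ 2 / 2 ≤ ‖(inner ℂ (ψ ε) (ψ 0) : ℂ)‖ := by
  have h1 : ‖ψ ε - ψ 0‖ ≤ L * εbar := by
    calc ‖ψ ε - ψ 0‖ ≤ L * ‖ε - 0‖ := hLip ε 0
    _ = L * ‖ε‖ := by rw [sub_zero]
    _ ≤ L * εbar := by nlinarith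
  have h2 : ‖ψ ε - ψ 0‖ ^ 2 ≤ (L * εbar) ^ 2 := by
    apply sq_le_sq' _ h1
    nlinarith [norm_nonneg (ψ ε - ψ 0)]
  have h3 := @norm_sub_sq ℂ _ _ _ _ (ψ ε) (ψ 0)
  rw [hψ ε, hψ 0] at h3
  have h4 : 1 - L ^ 2 * εbar ^ 2 / 2 ≤ Complex.re (inner ℂ (ψ ε) (ψ 0) : ℂ) := by
    have : RCLike.re (inner ℂ (ψ ε) (ψ 0) : ℂ) = Complex.re (inner ℂ (ψ ε) (ψ 0) : ℂ) := rfl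
    rw [this] at h3
    nlinarith
  exact le_trans h4 (Complex.re_le_norm _)
end

section
/- Let ψ : ℝ^N → ℂ^d be a map whose values are unit vectors, and suppose L > 0 is a Lipschitz bound of ψ with respect to the ∞-norm on ℝ^N, i.e. ‖ψ(ε) − ψ(ε′)‖₂ ≤ L·‖ε − ε′‖_∞ for all ε, ε′ ∈ ℝ^N. Let F ∈ [0, 1] and let ε̄ ≥ 0 satisfy ε̄ ≤ (√2 / L)·√(1 − F). Then for every ε ∈ ℝ^N with ‖ε‖_∞ ≤ ε̄ it holds that |⟨ψ(ε), ψ(0)⟩| ≥ F. -/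
set_option autoImplicit false

/-- converse formulation of Theorem 1 of the paper: if `L > 0` is a Lipschitz
bound of the unit-vector valued map `ψ : ℝ^N → ℂ^d` (with the ∞-norm on `ℝ^N`, which is the
default norm on `Fin N → ℝ`), `F ∈ [0,1]` and `ε̄ ≥ 0` satisfies `ε̄ ≤ (√2/L)·√(1−F)`, then
every `ε` with `‖ε‖_∞ ≤ ε̄` yields fidelity `|⟨ψ(ε), ψ(0)⟩| ≥ F`. -/
theorem noise_bound_for_prescribed_fidelity {N d : ℕ}
    (ψ : (Fin N → ℝ) → EuclideanSpace ℂ (Fin d)) (hψ : ∀ ε, ‖ψ ε‖ = 1)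
    (L : ℝ) (hL : 0 < L)
    (hLip : ∀ ε ε' : Fin N → ℝ, ‖ψ ε - ψ ε'‖ ≤ L * ‖ε - ε'‖)
    (F : ℝ) (hF0 : 0 ≤ F) (hF1 : F ≤ 1)
    (εbar : ℝ) (hεbar : 0 ≤ εbar) (hεbarF : εbar ≤ Real.sqrt 2 / L * Real.sqrt (1 - F))
    (ε : Fin N → ℝ) (hε : ‖ε‖ ≤ εbar) :
    F ≤ ‖(inner ℂ (ψ ε) (ψ 0) : ℂ)‖ := by
  have h1 : ‖ψ ε - ψ 0‖ ≤ Real.sqrt 2 * Real.sqrt (1 - F) := by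
    have := hLip ε 0
    simp only [sub_zero] at this
    calc ‖ψ ε - ψ 0‖ ≤ L * ‖ε‖ := this
    _ ≤ L * εbar := by nlinarith
    _ ≤ L * (Real.sqrt 2 / L * Real.sqrt (1 - F)) := by nlinarith
    _ = Real.sqrt 2 * Real.sqrt (1 - F) := by field_simp
  have h2 : ‖ψ ε - ψ 0‖ ^ 2 ≤ 2 * (1 - F) := by
    have hnn : (0:ℝ) ≤ Real.sqrt 2 * Real.sqrt (1 - F) :=
      mul_nonneg (Real.sqrt_nonneg _) (Real.sqrt_nonneg _)
    calc ‖ψ ε - ψ 0‖ ^ 2 ≤ (Real.sqrt 2 * Real.sqrt (1 - F)) ^ 2 := by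
          exact pow_le_pow_left₀ (norm_nonneg _) h1 2
    _ = 2 * (1 - F) := by
          rw [mul_pow, Real.sq_sqrt (by norm_num), Real.sq_sqrt (by linarith)]
  have hexp : ‖ψ ε - ψ 0‖ ^ 2
      = 2 - 2 * (RCLike.re (inner ℂ (ψ ε) (ψ 0) : ℂ)) := by
    rw [@norm_sub_sq ℂ, hψ, hψ]
    ring
  have hre : F ≤ RCLike.re (inner ℂ (ψ ε) (ψ 0) : ℂ) := by
    rw [hexp] at h2; linarith
  calc F ≤ RCLike.re (inner ℂ (ψ ε) (ψ 0) : ℂ) := hre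
  _ ≤ ‖(inner ℂ (ψ ε) (ψ 0) : ℂ)‖ := Complex.re_le_norm _
end

section
/- Let H₁, …, H_N be d×d complex Hermitian matrices, let ψ₀ ∈ ℂ^d be a unit vector, and for ε ∈ ℝ^N define the noisy circuit state ψ(ε) = exp(−i(1+ε₁)H₁)·exp(−i(1+ε₂)H₂)···exp(−i(1+ε_N)H_N)·ψ₀ (ordered matrix product applied to ψ₀), with ideal state ψ̂ = ψ(0). Then for any ε̄ ≥ 0 and any ε ∈ ℝ^N with ‖ε‖_∞ ≤ ε̄: |⟨ψ(ε), ψ̂⟩| ≥ 1 − (Σ_{i=1}^N ‖H_i‖₂)²·ε̄²/2. -/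
set_option autoImplicit false

open scoped Matrix

/-- The operator norm (induced 2-norm, i.e. maximum singular value) of a complex matrix. -/
noncomputable def opNorm {m n : Type*} [Fintype m] [Fintype n] [DecidableEq n]
    (A : Matrix m n ℂ) : ℝ :=
  ‖LinearMap.toContinuousLinearMap (Matrix.toEuclideanLin A)‖

/-- The noisy circuit state `ψ(ε) = exp(−i(1+ε₁)H₁) ⋯ exp(−i(1+ε_N)H_N) ψ₀`
(ordered matrix product applied to `ψ₀`). -/
noncomputable def circuitState {d N : ℕ} (H : Fin N → Matrix (Fin d) (Fin d) ℂ)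
    (ψ₀ : EuclideanSpace ℂ (Fin d)) (ε : Fin N → ℝ) : EuclideanSpace ℂ (Fin d) :=
  Matrix.toEuclideanLin
    (List.ofFn fun i => NormedSpace.exp ((-Complex.I * (1 + (ε i : ℂ))) • H i)).prod ψ₀

open NormedSpace

noncomputable instance aux_normedAlgebraRat_clm {d : ℕ} :
    NormedAlgebra ℚ (EuclideanSpace ℂ (Fin d) →L[ℂ] EuclideanSpace ℂ (Fin d)) :=
  NormedAlgebra.restrictScalars ℚ ℂ _
set_option maxHeartbeats 1000000

section helpers

variable {A : Type*} [NormedRing A]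

lemma aux_norm_ofFn_prod_le (h1 : ‖(1:A)‖ ≤ 1) :
    ∀ {N : ℕ} (f : Fin N → A), (∀ i, ‖f i‖ ≤ 1) → ‖(List.ofFn f).prod‖ ≤ 1 := by
  intro N
  induction N with
  | zero => intro f _; simpa using h1
  | succ n ih =>
    intro f hf
    rw [List.ofFn_succ, List.prod_cons]
    calc ‖f 0 * (List.ofFn fun i => f i.succ).prod‖
        ≤ ‖f 0‖ * ‖(List.ofFn fun i => f i.succ).prod‖ := norm_mul_le _ _
      _ ≤ 1 * 1 := by
          apply mul_le_mul (hf 0) (ih _ fun i => hf i.succ) (norm_nonneg _) zero_le_one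
      _ = 1 := one_mul 1

lemma aux_norm_ofFn_prod_sub_le (h1 : ‖(1:A)‖ ≤ 1) :
    ∀ {N : ℕ} (f g : Fin N → A), (∀ i, ‖f i‖ ≤ 1) → (∀ i, ‖g i‖ ≤ 1) →
      ‖(List.ofFn f).prod - (List.ofFn g).prod‖ ≤ ∑ i, ‖f i - g i‖ := by
  intro N
  induction N with
  | zero => intro f g _ _; simp
  | succ n ih =>
    intro f g hf hg
    rw [List.ofFn_succ, List.ofFn_succ, List.prod_cons, List.prod_cons, Fin.sum_univ_succ]
    set Pf := (List.ofFn fun i => f i.succ).prod with hPf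
    set Pg := (List.ofFn fun i => g i.succ).prod with hPg
    have key : f 0 * Pf - g 0 * Pg = (f 0 - g 0) * Pf + g 0 * (Pf - Pg) := by
      rw [sub_mul, mul_sub]; abel
    rw [key]
    calc ‖(f 0 - g 0) * Pf + g 0 * (Pf - Pg)‖
        ≤ ‖(f 0 - g 0) * Pf‖ + ‖g 0 * (Pf - Pg)‖ := norm_add_le _ _
      _ ≤ ‖f 0 - g 0‖ * ‖Pf‖ + ‖g 0‖ * ‖Pf - Pg‖ :=
          add_le_add (norm_mul_le _ _) (norm_mul_le _ _)
      _ ≤ ‖f 0 - g 0‖ * 1 + 1 * (∑ i : Fin n, ‖f i.succ - g i.succ‖) := by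
          apply add_le_add
          · exact mul_le_mul_of_nonneg_left
              (aux_norm_ofFn_prod_le h1 _ fun i => hf i.succ) (norm_nonneg _)
          · exact mul_le_mul (hg 0) (ih _ _ (fun i => hf i.succ) (fun i => hg i.succ))
              (norm_nonneg _) zero_le_one
      _ = ‖f 0 - g 0‖ + ∑ i : Fin n, ‖f i.succ - g i.succ‖ := by ring

end helpers

section clm

variable {d : ℕ}

local notation "E" => EuclideanSpace ℂ (Fin d)

lemma aux_unitary_norm_le {u : E →L[ℂ] E} (hu : u ∈ unitary (E →L[ℂ] E)) : ‖u‖ ≤ 1 := by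
  refine ContinuousLinearMap.opNorm_le_bound _ zero_le_one fun x => ?_
  rw [ContinuousLinearMap.norm_map_of_mem_unitary hu x, one_mul]

lemma aux_exp_unitary {T : E →L[ℂ] E} (hT : IsSelfAdjoint T) (c : ℂ) (hc : c.re = 0) :
    exp (c • T) ∈ unitary (E →L[ℂ] E) := by
  apply exp_mem_unitary_of_mem_skewAdjoint
  have hcs : star c = -c := by
    rw [Complex.star_def, Complex.ext_iff]
    simp [Complex.conj_re, Complex.conj_im, hc]
  rw [skewAdjoint.mem_iff, star_smul, hT.star_eq, hcs]
  exact neg_smul c T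

lemma aux_exp_sub_one {B : E →L[ℂ] E} (hB : star B = -B) :
    ‖exp B - 1‖ ≤ ‖B‖ := by
  set f : ℝ → (E →L[ℂ] E) := fun s => exp ((s : ℂ) • B) with hf
  have hder : ∀ s : ℝ, HasDerivAt f (exp ((s : ℂ) • B) * B) s := by
    intro s
    have h1 : HasDerivAt (fun u : ℂ => exp (u • B)) (exp ((s : ℂ) • B) * B) (s : ℂ) :=
      hasDerivAt_exp_smul_const B (s : ℂ)
    have h2 : HasDerivAt (fun y : ℝ => (y : ℂ)) 1 s := by
      exact Complex.ofRealCLM.hasDerivAt (x := s)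
    have := HasDerivAt.scomp (x := s) h1 h2
    rw [one_smul] at this
    exact this
  have hbound : ∀ s : ℝ, ‖exp ((s : ℂ) • B) * B‖ ≤ ‖B‖ := by
    intro s
    have hmem : exp ((s : ℂ) • B) ∈ unitary (E →L[ℂ] E) := by
      apply exp_mem_unitary_of_mem_skewAdjoint
      rw [skewAdjoint.mem_iff, star_smul, hB, Complex.star_def, Complex.conj_ofReal,
        smul_neg]
    calc ‖exp ((s : ℂ) • B) * B‖ ≤ ‖exp ((s : ℂ) • B)‖ * ‖B‖ := norm_mul_le _ _
      _ ≤ 1 * ‖B‖ := mul_le_mul_of_nonneg_right (aux_unitary_norm_le hmem) (norm_nonneg _)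
      _ = ‖B‖ := one_mul _
  have h01 : (1 : ℝ) ∈ Set.Icc (0 : ℝ) 1 := by constructor <;> norm_num
  have := norm_image_sub_le_of_norm_deriv_le_segment'
    (f := f) (f' := fun s => exp ((s : ℂ) • B) * B) (a := 0) (b := 1) (C := ‖B‖)
    (fun x _ => (hder x).hasDerivWithinAt) (fun x _ => hbound x) 1 h01
  have hf0 : f 0 = 1 := by
    have h0 : (((0:ℝ)):ℂ) • B = 0 := by ext x; simp
    simp only [hf, h0, exp_zero]
  have hf1 : f 1 = exp B := by simp [hf]
  rw [hf0, hf1] at this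
  linarith [this]

end clm

section main

variable {d N : ℕ}

local notation "E" => EuclideanSpace ℂ (Fin d)
local notation "Φ" => Matrix.toEuclideanCLM (𝕜 := ℂ) (n := Fin d)

lemma aux_phi_cont : Continuous (fun A : Matrix (Fin d) (Fin d) ℂ => Φ A) := by
  let L : Matrix (Fin d) (Fin d) ℂ ≃ₗ[ℂ] ((EuclideanSpace ℂ (Fin d)) →L[ℂ] (EuclideanSpace ℂ (Fin d))) :=
    Matrix.toEuclideanLin.trans LinearMap.toContinuousLinearMap
  have : (fun A : Matrix (Fin d) (Fin d) ℂ => Φ A) = fun A => L A := rfl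
  rw [this]
  exact L.toLinearMap.continuous_of_finiteDimensional

lemma aux_map_exp (M : Matrix (Fin d) (Fin d) ℂ) :
    Φ (NormedSpace.exp M) = NormedSpace.exp (Φ M) := by
  let L : Matrix (Fin d) (Fin d) ℂ ≃ₗ[ℂ] ((EuclideanSpace ℂ (Fin d)) →L[ℂ] (EuclideanSpace ℂ (Fin d))) :=
    Matrix.toEuclideanLin.trans LinearMap.toContinuousLinearMap
  let Lc := L.toContinuousLinearEquiv
  have hL : ∀ A : Matrix (Fin d) (Fin d) ℂ, Φ A = Lc A := fun _ => rfl
  rw [NormedSpace.exp_eq_tsum ℂ, NormedSpace.exp_eq_tsum ℂ, hL, Lc.map_tsum]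
  congr 1
  funext n
  rw [map_smul]
  congr 1
  exact map_pow (Matrix.toEuclideanCLM (𝕜 := ℂ) (n := Fin d)) M n

lemma aux_circuit_eq (H : Fin N → Matrix (Fin d) (Fin d) ℂ) (ψ₀ : E) (ε : Fin N → ℝ) :
    circuitState H ψ₀ ε =
      (List.ofFn fun i =>
        NormedSpace.exp ((-Complex.I * (1 + (ε i : ℂ))) • Φ (H i))).prod ψ₀ := by
  unfold circuitState
  have h1 : Matrix.toEuclideanLin
      (List.ofFn fun i =>
        NormedSpace.exp ((-Complex.I * (1 + (ε i : ℂ))) • H i)).prod ψ₀ =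
      Φ (List.ofFn fun i =>
        NormedSpace.exp ((-Complex.I * (1 + (ε i : ℂ))) • H i)).prod ψ₀ := rfl
  have h2 : (⇑(Matrix.toEuclideanCLM (𝕜 := ℂ) (n := Fin d)) ∘ fun i =>
      NormedSpace.exp ((-Complex.I * (1 + (ε i : ℂ))) • H i)) =
      fun i => NormedSpace.exp ((-Complex.I * (1 + (ε i : ℂ))) • Φ (H i)) := by
    funext i
    show Φ (NormedSpace.exp ((-Complex.I * (1 + (ε i : ℂ))) • H i)) = _
    rw [aux_map_exp, map_smul]
  rw [h1, map_list_prod, List.map_ofFn, h2]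

lemma aux_selfadj {A : Matrix (Fin d) (Fin d) ℂ} (hA : A.IsHermitian) :
    IsSelfAdjoint (Φ A) := by
  exact hA.isSelfAdjoint.map Φ

lemma aux_coeff_re (t : ℝ) : (-Complex.I * (1 + (t : ℂ))).re = 0 := by
  simp [Complex.add_im]

end main

/-- worst-case fidelity bound of Theorem 2 of the paper: for any `ε̄ ≥ 0` and
any `ε` with `‖ε‖_∞ ≤ ε̄`, the fidelity between the noisy state `ψ(ε)` and the ideal state
`ψ̂ = ψ(0)` satisfies `|⟨ψ(ε), ψ̂⟩| ≥ 1 − (Σᵢ ‖Hᵢ‖₂)²·ε̄²/2`. -/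
theorem circuit_worst_case_fidelity {d N : ℕ} (H : Fin N → Matrix (Fin d) (Fin d) ℂ)
    (hH : ∀ i, (H i).IsHermitian)
    (ψ₀ : EuclideanSpace ℂ (Fin d)) (hψ₀ : ‖ψ₀‖ = 1)
    (εbar : ℝ) (hεbar : 0 ≤ εbar) (ε : Fin N → ℝ) (hε : ‖ε‖ ≤ εbar) :
    1 - (∑ i, opNorm (H i)) ^ 2 * εbar ^ 2 / 2 ≤
      ‖(inner ℂ (circuitState H ψ₀ ε) (circuitState H ψ₀ 0) : ℂ)‖ := by
  classical
  set T : Fin N → (EuclideanSpace ℂ (Fin d) →L[ℂ] EuclideanSpace ℂ (Fin d)) :=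
    fun i => Matrix.toEuclideanCLM (𝕜 := ℂ) (H i) with hT
  set F : (Fin N → ℝ) → Fin N → (EuclideanSpace ℂ (Fin d) →L[ℂ] EuclideanSpace ℂ (Fin d)) :=
    fun e i => exp ((-Complex.I * (1 + (e i : ℂ))) • T i) with hF
  have hTsa : ∀ i, IsSelfAdjoint (T i) := fun i => aux_selfadj (hH i)
  have hunit : ∀ (e : Fin N → ℝ) (i : Fin N),
      F e i ∈ unitary (EuclideanSpace ℂ (Fin d) →L[ℂ] EuclideanSpace ℂ (Fin d)) :=
    fun e i => aux_exp_unitary (hTsa i) _ (aux_coeff_re (e i))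
  have hnorm1 : ∀ (e : Fin N → ℝ) (i : Fin N), ‖F e i‖ ≤ 1 :=
    fun e i => aux_unitary_norm_le (hunit e i)
  have hone : ‖(1 : EuclideanSpace ℂ (Fin d) →L[ℂ] EuclideanSpace ℂ (Fin d))‖ ≤ 1 := by
    rw [ContinuousLinearMap.one_def]
    exact ContinuousLinearMap.norm_id_le
  have hcirc : ∀ e : Fin N → ℝ, circuitState H ψ₀ e = (List.ofFn (F e)).prod ψ₀ :=
    fun e => aux_circuit_eq H ψ₀ e
  -- states have norm one
  have hstate : ∀ e : Fin N → ℝ, ‖circuitState H ψ₀ e‖ = 1 := by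
    intro e
    rw [hcirc e]
    have hmem : (List.ofFn (F e)).prod ∈
        unitary (EuclideanSpace ℂ (Fin d) →L[ℂ] EuclideanSpace ℂ (Fin d)) := by
      apply Submonoid.list_prod_mem
      intro x hx
      rw [List.mem_ofFn] at hx
      obtain ⟨i, rfl⟩ := hx
      exact hunit e i
    rw [ContinuousLinearMap.norm_map_of_mem_unitary hmem, hψ₀]
  -- bound on each factor difference
  have hdiff : ∀ i : Fin N, ‖F ε i - F 0 i‖ ≤ εbar * ‖T i‖ := by
    intro i
    have hc : (-Complex.I * (1 + (ε i : ℂ))) • T i =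
        (-Complex.I) • T i + (-Complex.I * (ε i : ℂ)) • T i := by
      have h1 : (-Complex.I * (1 + (ε i : ℂ))) = -Complex.I + -Complex.I * (ε i : ℂ) := by
        ring
      rw [h1]
      exact add_smul (R := ℂ) (M := (EuclideanSpace ℂ (Fin d) →L[ℂ] EuclideanSpace ℂ (Fin d))) _ _ _
    have hc0 : (-Complex.I * (1 + (((0 : Fin N → ℝ)) i : ℂ))) • T i = (-Complex.I) • T i := by
      norm_num
    have hcomm : Commute ((-Complex.I) • T i) ((-Complex.I * (ε i : ℂ)) • T i) :=
      ((Commute.refl (T i)).smul_left _).smul_right _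
    have hsplit : F ε i =
        exp ((-Complex.I) • T i) * exp ((-Complex.I * (ε i : ℂ)) • T i) := by
      show exp _ = _
      rw [hc, exp_add_of_commute hcomm]
    have h0 : F 0 i = exp ((-Complex.I) • T i) := by
      show exp _ = _
      rw [hc0]
    have hBskew : star ((-Complex.I * (ε i : ℂ)) • T i) = -((-Complex.I * (ε i : ℂ)) • T i) := by
      have hstar : star (-Complex.I * (ε i : ℂ)) = -(-Complex.I * (ε i : ℂ)) := by
        simp [Complex.ext_iff]
      rw [star_smul, (hTsa i).star_eq, hstar]
      exact neg_smul (R := ℂ) (M := (EuclideanSpace ℂ (Fin d) →L[ℂ] EuclideanSpace ℂ (Fin d))) _ _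
    have hBnorm : ‖(-Complex.I * (ε i : ℂ)) • T i‖ ≤ εbar * ‖T i‖ := by
      have h2 : ‖(-Complex.I * (ε i : ℂ)) • T i‖ = ‖-Complex.I * (ε i : ℂ)‖ * ‖T i‖ :=
        norm_smul (α := ℂ) (β := (EuclideanSpace ℂ (Fin d) →L[ℂ] EuclideanSpace ℂ (Fin d))) _ _
      have h1 : ‖-Complex.I * (ε i : ℂ)‖ = |ε i| := by
        simp [norm_mul]
      rw [h2, h1]
      apply mul_le_mul_of_nonneg_right _ (norm_nonneg _)
      calc |ε i| = ‖ε i‖ := (Real.norm_eq_abs _).symm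
        _ ≤ ‖ε‖ := norm_le_pi_norm ε i
        _ ≤ εbar := hε
    rw [hsplit, h0]
    calc ‖exp ((-Complex.I) • T i) * exp ((-Complex.I * (ε i : ℂ)) • T i) -
            exp ((-Complex.I) • T i)‖
        = ‖exp ((-Complex.I) • T i) * (exp ((-Complex.I * (ε i : ℂ)) • T i) - 1)‖ := by
          rw [mul_sub, mul_one]
      _ ≤ ‖exp ((-Complex.I) • T i)‖ * ‖exp ((-Complex.I * (ε i : ℂ)) • T i) - 1‖ :=
          norm_mul_le _ _
      _ ≤ 1 * ‖(-Complex.I * (ε i : ℂ)) • T i‖ := by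
          apply mul_le_mul _ (aux_exp_sub_one hBskew) (norm_nonneg _) zero_le_one
          exact aux_unitary_norm_le (aux_exp_unitary (hTsa i) _ (by simp))
      _ = ‖(-Complex.I * (ε i : ℂ)) • T i‖ := one_mul _
      _ ≤ εbar * ‖T i‖ := hBnorm
  -- bound on the state difference
  have hsub : ‖circuitState H ψ₀ ε - circuitState H ψ₀ 0‖ ≤ εbar * ∑ i, opNorm (H i) := by
    rw [hcirc ε, hcirc 0]
    have heq : (List.ofFn (F ε)).prod ψ₀ - (List.ofFn (F 0)).prod ψ₀ =
        ((List.ofFn (F ε)).prod - (List.ofFn (F 0)).prod) ψ₀ :=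
      (ContinuousLinearMap.sub_apply _ _ _).symm
    rw [heq]
    calc ‖((List.ofFn (F ε)).prod - (List.ofFn (F 0)).prod) ψ₀‖
        ≤ ‖(List.ofFn (F ε)).prod - (List.ofFn (F 0)).prod‖ * ‖ψ₀‖ :=
          ContinuousLinearMap.le_opNorm _ _
      _ = ‖(List.ofFn (F ε)).prod - (List.ofFn (F 0)).prod‖ := by rw [hψ₀, mul_one]
      _ ≤ ∑ i, ‖F ε i - F 0 i‖ :=
          aux_norm_ofFn_prod_sub_le hone (F ε) (F 0) (hnorm1 ε) (hnorm1 0)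
      _ ≤ ∑ i, εbar * ‖T i‖ := Finset.sum_le_sum fun i _ => hdiff i
      _ = εbar * ∑ i, opNorm (H i) := by
          rw [← Finset.mul_sum]
          congr 1
  -- conclude with the polarization identity
  set u := circuitState H ψ₀ ε with hu
  set v := circuitState H ψ₀ 0 with hv
  have hun : ‖u‖ = 1 := hstate ε
  have hvn : ‖v‖ = 1 := hstate 0
  have hns : ‖u - v‖ ^ 2 = 2 - 2 * RCLike.re (inner ℂ u v : ℂ) := by
    rw [@norm_sub_sq ℂ, hun, hvn]
    ring
  have habs : RCLike.re (inner ℂ u v : ℂ) ≤ ‖(inner ℂ u v : ℂ)‖ := by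
    simpa using Complex.re_le_norm (inner ℂ u v : ℂ)
  have hS : (0 : ℝ) ≤ ∑ i, opNorm (H i) := by
    apply Finset.sum_nonneg
    intro i _
    exact norm_nonneg _
  have hsq : ‖u - v‖ ^ 2 ≤ (∑ i, opNorm (H i)) ^ 2 * εbar ^ 2 := by
    calc ‖u - v‖ ^ 2 ≤ (εbar * ∑ i, opNorm (H i)) ^ 2 :=
          pow_le_pow_left₀ (norm_nonneg _) hsub 2
      _ = (∑ i, opNorm (H i)) ^ 2 * εbar ^ 2 := by ring
  linarith
end

section
/- Let N = 2m be even, let H₁, …, H_N be d×d complex Hermitian matrices, let ψ₀ ∈ ℂ^d be a unit vector, and for ε ∈ ℝ^N define ψ(ε) = exp(−i(1+ε₁)H₁)···exp(−i(1+ε_N)H_N)·ψ₀ (ordered matrix product applied to ψ₀). Then √2·Σ_{i=1}^{m} ‖[H_{2i−1} H_{2i}]‖₂ is a Lipschitz bound of ψ with respect to the ∞-norm, i.e. for all ε, ε′ ∈ ℝ^N: ‖ψ(ε) − ψ(ε′)‖₂ ≤ √2·(Σ_{i=1}^{m} ‖[H_{2i−1} H_{2i}]‖₂)·‖ε − ε′‖_∞.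 -/
set_option autoImplicit false
set_option maxHeartbeats 1000000
set_option linter.unreachableTactic false
set_option linter.unusedTactic false

open scoped Matrix

namespace PairwiseAux

open NormedSpace Matrix

lemma comp_ofReal' {F : Type*} [NormedAddCommGroup F] [NormedSpace ℂ F] {g : ℂ → F} {g' : F}
    {z : ℝ} (hf : HasDerivAt g g' (z : ℂ)) : HasDerivAt (fun y : ℝ => g (y : ℂ)) g' z := by
  have A := hf.hasFDerivAt.restrictScalars ℝ
  have B := A.comp z (Complex.ofRealCLM.hasFDerivAt (x := z))
  have C := B.hasDerivAt
  simpa [Function.comp_def] using C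

variable {d : ℕ}

noncomputable instance clmRatNormedAlgebra :
    NormedAlgebra ℚ (EuclideanSpace ℂ (Fin d) →L[ℂ] EuclideanSpace ℂ (Fin d)) :=
  NormedAlgebra.restrictScalars ℚ ℂ _


noncomputable def clmLin (d : ℕ) :
    Matrix (Fin d) (Fin d) ℂ →ₗ[ℂ]
      (EuclideanSpace ℂ (Fin d) →L[ℂ] EuclideanSpace ℂ (Fin d)) where
  toFun := ⇑(Matrix.toEuclideanCLM (n := Fin d) (𝕜 := ℂ))
  map_add' x y := map_add _ x y
  map_smul' c x := map_smul _ c x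

noncomputable def gate (T : EuclideanSpace ℂ (Fin d) →L[ℂ] EuclideanSpace ℂ (Fin d)) (t : ℝ) :
    EuclideanSpace ℂ (Fin d) →L[ℂ] EuclideanSpace ℂ (Fin d) :=
  exp ((-Complex.I * (t : ℂ)) • T)

lemma gate_mem_unitary {T : EuclideanSpace ℂ (Fin d) →L[ℂ] EuclideanSpace ℂ (Fin d)}
    (hT : IsSelfAdjoint T) (t : ℝ) :
    gate T t ∈ unitary (EuclideanSpace ℂ (Fin d) →L[ℂ] EuclideanSpace ℂ (Fin d)) := by
  apply exp_mem_unitary_of_mem_skewAdjoint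
  rw [skewAdjoint.mem_iff, star_smul, hT.star_eq]
  have h : star (-Complex.I * (t : ℂ)) = -(-Complex.I * (t : ℂ)) := by
    simp [Complex.ext_iff]
  rw [h]
  exact neg_smul (-Complex.I * (t : ℂ)) T

lemma gate_norm_map {T : EuclideanSpace ℂ (Fin d) →L[ℂ] EuclideanSpace ℂ (Fin d)}
    (hT : IsSelfAdjoint T) (t : ℝ) (x : EuclideanSpace ℂ (Fin d)) :
    ‖gate T t x‖ = ‖x‖ :=
  ContinuousLinearMap.norm_map_of_mem_unitary (gate_mem_unitary hT t) x

lemma gate_add (T : EuclideanSpace ℂ (Fin d) →L[ℂ] EuclideanSpace ℂ (Fin d)) (a b : ℝ) :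
    gate T (a + b) = gate T a * gate T b := by
  unfold gate
  rw [← NormedSpace.exp_add_of_commute (((Commute.refl T).smul_left _).smul_right _)]
  congr 1
  have : (-Complex.I * ((a + b : ℝ) : ℂ)) = (-Complex.I * (a : ℂ)) + (-Complex.I * (b : ℂ)) := by
    push_cast; ring
  rw [this]
  exact add_smul (-Complex.I * (a : ℂ)) (-Complex.I * (b : ℂ)) T

lemma gate_zero (T : EuclideanSpace ℂ (Fin d) →L[ℂ] EuclideanSpace ℂ (Fin d)) :
    gate T 0 = 1 := by
  have h : (-Complex.I * ((0 : ℝ) : ℂ)) • T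
      = (0 : EuclideanSpace ℂ (Fin d) →L[ℂ] EuclideanSpace ℂ (Fin d)) := by
    module
  unfold gate
  rw [h]
  exact exp_zero

lemma exp_coe_smul (T : EuclideanSpace ℂ (Fin d) →L[ℂ] EuclideanSpace ℂ (Fin d)) (δ t : ℝ) :
    exp ((t : ℂ) • ((-Complex.I * (δ : ℂ)) • T)) = gate T (t * δ) := by
  rw [smul_smul]
  unfold gate
  congr 2
  push_cast
  ring

lemma pair_core {T₁ T₂ : EuclideanSpace ℂ (Fin d) →L[ℂ] EuclideanSpace ℂ (Fin d)}
    (h₁ : IsSelfAdjoint T₁) (h₂ : IsSelfAdjoint T₂) (δ₁ δ₂ : ℝ) {C : ℝ}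
    (hC : ∀ v : EuclideanSpace ℂ (Fin d), ‖(δ₁ : ℂ) • T₁ v + (δ₂ : ℂ) • T₂ v‖ ≤ C * ‖v‖)
    (x : EuclideanSpace ℂ (Fin d)) :
    ‖gate T₁ δ₁ (gate T₂ δ₂ x) - x‖ ≤ C * ‖x‖ := by
  set A₁ := (-Complex.I * (δ₁ : ℂ)) • T₁ with hA₁
  set A₂ := (-Complex.I * (δ₂ : ℂ)) • T₂ with hA₂
  set f : ℝ → EuclideanSpace ℂ (Fin d) :=
    fun t => exp ((t : ℂ) • A₁) (exp ((t : ℂ) • A₂) x) with hf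
  set g : ℝ → EuclideanSpace ℂ (Fin d) :=
    fun t => exp ((t : ℂ) • A₁)
      (A₁ (exp ((t : ℂ) • A₂) x) + A₂ (exp ((t : ℂ) • A₂) x)) with hg
  have hderiv : ∀ t : ℝ, HasDerivAt f (g t) t := by
    intro t
    have D1 : HasDerivAt (fun y : ℝ => exp ((y : ℂ) • A₁)) (exp ((t : ℂ) • A₁) * A₁) t :=
      comp_ofReal' (hasDerivAt_exp_smul_const A₁ ((t : ℂ)))
    have D2 : HasDerivAt (fun y : ℝ => exp ((y : ℂ) • A₂)) (exp ((t : ℂ) • A₂) * A₂) t :=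
      comp_ofReal' (hasDerivAt_exp_smul_const A₂ ((t : ℂ)))
    have DF := D1.mul D2
    set ev : (EuclideanSpace ℂ (Fin d) →L[ℂ] EuclideanSpace ℂ (Fin d)) →L[ℝ]
        EuclideanSpace ℂ (Fin d) :=
      (ContinuousLinearMap.apply ℂ (EuclideanSpace ℂ (Fin d)) x).restrictScalars ℝ with hev
    have hd := ev.hasFDerivAt.comp_hasDerivAt t DF
    have hcomm : exp ((t : ℂ) • A₂) * A₂ = A₂ * exp ((t : ℂ) • A₂) :=
      (((Commute.refl A₂).smul_left ((t : ℂ))).exp_left).eq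
    have key2 : exp ((t : ℂ) • A₂) (A₂ x) = A₂ (exp ((t : ℂ) • A₂) x) :=
      congrArg (fun L : EuclideanSpace ℂ (Fin d) →L[ℂ] EuclideanSpace ℂ (Fin d) => L x) hcomm
    convert hd using 1
    show exp ((t : ℂ) • A₁)
        (A₁ (exp ((t : ℂ) • A₂) x) + A₂ (exp ((t : ℂ) • A₂) x)) = _
    show _ = (exp ((t : ℂ) • A₁) * A₁ * exp ((t : ℂ) • A₂)
        + exp ((t : ℂ) • A₁) * (exp ((t : ℂ) • A₂) * A₂)) x
    rw [map_add, ContinuousLinearMap.add_apply]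
    simp only [ContinuousLinearMap.mul_apply]
    rw [key2]
    all_goals rfl
  have hbound : ∀ t : ℝ, ‖g t‖ ≤ C * ‖x‖ := by
    intro t
    have hv : ‖exp ((t : ℂ) • A₂) x‖ = ‖x‖ := by
      rw [hA₂, exp_coe_smul]; exact gate_norm_map h₂ _ x
    set v := exp ((t : ℂ) • A₂) x with hvdef
    have h1 : ‖g t‖ = ‖A₁ v + A₂ v‖ := by
      rw [hg]
      simp only
      rw [hA₁, exp_coe_smul]
      exact gate_norm_map h₁ _ _
    have h2 : ‖A₁ v + A₂ v‖ = ‖(δ₁ : ℂ) • T₁ v + (δ₂ : ℂ) • T₂ v‖ := by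
      rw [hA₁, hA₂]
      simp only [ContinuousLinearMap.smul_apply]
      rw [← smul_smul, ← smul_smul, ← smul_add, norm_smul]
      simp
    rw [h1, h2, ← hv]
    exact hC v
  have hmvt := norm_image_sub_le_of_norm_deriv_le_segment'
    (f := f) (f' := g) (a := (0 : ℝ)) (b := 1)
    (fun t _ => (hderiv t).hasDerivWithinAt) (fun t _ => hbound t) 1
    (Set.right_mem_Icc.mpr zero_le_one)
  have hf1 : f 1 = gate T₁ δ₁ (gate T₂ δ₂ x) := by
    show exp (((1:ℝ) : ℂ) • A₁) (exp (((1:ℝ) : ℂ) • A₂) x) = _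
    rw [hA₁, hA₂, exp_coe_smul, exp_coe_smul, one_mul, one_mul]
  have hf0 : f 0 = x := by
    show exp (((0:ℝ) : ℂ) • A₁) (exp (((0:ℝ) : ℂ) • A₂) x) = x
    rw [hA₁, hA₂, exp_coe_smul, exp_coe_smul, zero_mul, zero_mul, gate_zero, gate_zero]
    rfl
  rw [hf1, hf0] at hmvt
  simpa using hmvt

lemma isSA {A : Matrix (Fin d) (Fin d) ℂ} (hA : A.IsHermitian) :
    IsSelfAdjoint (Matrix.toEuclideanCLM (𝕜 := ℂ) A) := by
  show star _ = _
  rw [← map_star]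
  exact congrArg _ hA

lemma pair_diff {T₁ T₂ : EuclideanSpace ℂ (Fin d) →L[ℂ] EuclideanSpace ℂ (Fin d)}
    (h₁ : IsSelfAdjoint T₁) (h₂ : IsSelfAdjoint T₂) (a a' b b' : ℝ) {C : ℝ}
    (hC : ∀ v : EuclideanSpace ℂ (Fin d),
      ‖((a - a' : ℝ) : ℂ) • T₁ v + ((b - b' : ℝ) : ℂ) • T₂ v‖ ≤ C * ‖v‖)
    (x : EuclideanSpace ℂ (Fin d)) :
    ‖gate T₁ a (gate T₂ b x) - gate T₁ a' (gate T₂ b' x)‖ ≤ C * ‖x‖ := by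
  have e1 : gate T₁ a = gate T₁ a' * gate T₁ (a - a') := by
    rw [← gate_add]; congr 1; ring
  have e2 : gate T₂ b = gate T₂ (b - b') * gate T₂ b' := by
    rw [← gate_add]; congr 1; ring
  rw [e1, e2]
  simp only [ContinuousLinearMap.mul_apply]
  rw [← map_sub (gate T₁ a' : _ →L[ℂ] _)]
  rw [gate_norm_map h₁]
  have := pair_core h₁ h₂ (a - a') (b - b') hC (gate T₂ b' x)
  rwa [gate_norm_map h₂] at this

lemma columns_bound (H₁ H₂ : Matrix (Fin d) (Fin d) ℂ) (δ₁ δ₂ : ℝ)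
    (v : EuclideanSpace ℂ (Fin d)) :
    ‖(δ₁ : ℂ) • Matrix.toEuclideanCLM (𝕜 := ℂ) H₁ v + (δ₂ : ℂ) • Matrix.toEuclideanCLM (𝕜 := ℂ) H₂ v‖
      ≤ (opNorm (Matrix.fromCols H₁ H₂) * Real.sqrt (δ₁ ^ 2 + δ₂ ^ 2)) * ‖v‖ := by
  set L := LinearMap.toContinuousLinearMap (Matrix.toEuclideanLin (Matrix.fromCols H₁ H₂)) with hL
  set w : EuclideanSpace ℂ (Fin d ⊕ Fin d) :=
    WithLp.toLp 2 (Sum.elim ((δ₁ : ℂ) • (WithLp.ofLp v)) ((δ₂ : ℂ) • (WithLp.ofLp v))) with hw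
  have hLw : L w = (δ₁ : ℂ) • Matrix.toEuclideanCLM (𝕜 := ℂ) H₁ v
      + (δ₂ : ℂ) • Matrix.toEuclideanCLM (𝕜 := ℂ) H₂ v := by
    show Matrix.toEuclideanLin (Matrix.fromCols H₁ H₂) w = _
    rw [hw, Matrix.toEuclideanLin_apply_piLp_toLp, Matrix.fromCols_mulVec_sumElim,
      Matrix.mulVec_smul, Matrix.mulVec_smul]
    rfl
  have h1 : ‖L w‖ ≤ opNorm (Matrix.fromCols H₁ H₂) * ‖w‖ := L.le_opNorm w
  have hwnorm : ‖w‖ = Real.sqrt (δ₁ ^ 2 + δ₂ ^ 2) * ‖v‖ := by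
    rw [EuclideanSpace.norm_eq, EuclideanSpace.norm_eq (x := v)]
    have hsum : (∑ i : Fin d ⊕ Fin d, ‖w i‖ ^ 2)
        = (δ₁ ^ 2 + δ₂ ^ 2) * ∑ i : Fin d, ‖v i‖ ^ 2 := by
      rw [Fintype.sum_sum_type]
      have hl : ∀ i : Fin d, ‖w (Sum.inl i)‖ ^ 2 = δ₁ ^ 2 * ‖v i‖ ^ 2 := by
        intro i
        have : w (Sum.inl i) = (δ₁ : ℂ) * v i := rfl
        rw [this, norm_mul, mul_pow, Complex.norm_real, Real.norm_eq_abs, sq_abs]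
      have hr : ∀ i : Fin d, ‖w (Sum.inr i)‖ ^ 2 = δ₂ ^ 2 * ‖v i‖ ^ 2 := by
        intro i
        have : w (Sum.inr i) = (δ₂ : ℂ) * v i := rfl
        rw [this, norm_mul, mul_pow, Complex.norm_real, Real.norm_eq_abs, sq_abs]
      simp only [hl, hr, ← Finset.mul_sum]
      ring
    rw [hsum, Real.sqrt_mul (by positivity)]
  calc ‖(δ₁ : ℂ) • Matrix.toEuclideanCLM (𝕜 := ℂ) H₁ v + (δ₂ : ℂ) • Matrix.toEuclideanCLM (𝕜 := ℂ) H₂ v‖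
      = ‖L w‖ := by rw [hLw]
    _ ≤ opNorm (Matrix.fromCols H₁ H₂) * ‖w‖ := h1
    _ = opNorm (Matrix.fromCols H₁ H₂) * (Real.sqrt (δ₁ ^ 2 + δ₂ ^ 2) * ‖v‖) := by rw [hwnorm]
    _ = (opNorm (Matrix.fromCols H₁ H₂) * Real.sqrt (δ₁ ^ 2 + δ₂ ^ 2)) * ‖v‖ := by ring

lemma norm_list_prod_apply :
    ∀ (l : List (EuclideanSpace ℂ (Fin d) →L[ℂ] EuclideanSpace ℂ (Fin d))),
      (∀ u ∈ l, ∀ x : EuclideanSpace ℂ (Fin d), ‖u x‖ = ‖x‖) →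
      ∀ x : EuclideanSpace ℂ (Fin d), ‖l.prod x‖ = ‖x‖
  | [], _, x => by simp
  | (a :: l), h, x => by
    rw [List.prod_cons, ContinuousLinearMap.mul_apply,
      h a (List.mem_cons_self) (l.prod x),
      norm_list_prod_apply l (fun u hu => h u (List.mem_cons_of_mem a hu)) x]

lemma circuitState_eq {N : ℕ} (H : Fin N → Matrix (Fin d) (Fin d) ℂ)
    (ψ₀ : EuclideanSpace ℂ (Fin d)) (ε : Fin N → ℝ) :
    circuitState H ψ₀ ε
      = ((List.ofFn fun i => gate (Matrix.toEuclideanCLM (𝕜 := ℂ) (H i)) (1 + ε i)).prod) ψ₀ := by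
  letI : SeminormedRing (Matrix (Fin d) (Fin d) ℂ) := Matrix.linftyOpSemiNormedRing
  letI : NormedRing (Matrix (Fin d) (Fin d) ℂ) := Matrix.linftyOpNormedRing
  letI : NormedAlgebra ℂ (Matrix (Fin d) (Fin d) ℂ) := Matrix.linftyOpNormedAlgebra
  letI : NormedAlgebra ℚ (Matrix (Fin d) (Fin d) ℂ) := NormedAlgebra.restrictScalars ℚ ℂ _
  have hcont : Continuous (⇑(Matrix.toEuclideanCLM (n := Fin d) (𝕜 := ℂ))) :=
    (clmLin d).continuous_of_finiteDimensional
  have hmap : ∀ i : Fin N,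
      Matrix.toEuclideanCLM (𝕜 := ℂ) (exp ((-Complex.I * (1 + (ε i : ℂ))) • H i))
        = gate (Matrix.toEuclideanCLM (𝕜 := ℂ) (H i)) (1 + ε i) := by
    intro i
    erw [map_exp _ hcont, _root_.map_smul]
    unfold gate
    congr 2
    push_cast
    ring
  show (Matrix.toEuclideanCLM (𝕜 := ℂ)
    ((List.ofFn fun i => exp ((-Complex.I * (1 + (ε i : ℂ))) • H i)).prod)) ψ₀ = _
  rw [map_list_prod, List.map_ofFn]
  have heq : (⇑(Matrix.toEuclideanCLM (n := Fin d) (𝕜 := ℂ))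
      ∘ fun i => exp ((-Complex.I * (1 + (ε i : ℂ))) • H i))
      = fun i => gate (Matrix.toEuclideanCLM (𝕜 := ℂ) (H i)) (1 + ε i) :=
    funext fun i => hmap i
  rw [heq]

lemma norm_circuitState {N : ℕ} (H : Fin N → Matrix (Fin d) (Fin d) ℂ)
    (hH : ∀ i, (H i).IsHermitian) (ψ₀ : EuclideanSpace ℂ (Fin d)) (ε : Fin N → ℝ) :
    ‖circuitState H ψ₀ ε‖ = ‖ψ₀‖ := by
  rw [circuitState_eq]
  apply norm_list_prod_apply
  intro u hu x
  obtain ⟨i, rfl⟩ := Set.mem_range.mp ((List.mem_ofFn' _ _).mp hu)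
  exact gate_norm_map (isSA (hH i)) _ x

lemma key (ψ₀ : EuclideanSpace ℂ (Fin d)) (hψ₀ : ‖ψ₀‖ = 1) :
    ∀ (m : ℕ) (H : Fin (2 * m) → Matrix (Fin d) (Fin d) ℂ), (∀ i, (H i).IsHermitian) →
    ∀ (ε ε' : Fin (2 * m) → ℝ),
    ‖circuitState H ψ₀ ε - circuitState H ψ₀ ε'‖ ≤
      Real.sqrt 2 *
        (∑ i : Fin m, opNorm (Matrix.fromCols
          (H ⟨2 * (i : ℕ), by have := i.isLt; omega⟩)
          (H ⟨2 * (i : ℕ) + 1, by have := i.isLt; omega⟩))) * ‖ε - ε'‖ := by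
  intro m
  induction m with
  | zero =>
    intro H hH ε ε'
    have hεε : ε = ε' := funext fun i => (Nat.not_lt_zero _ i.isLt).elim
    rw [hεε]
    simp
  | succ m IH =>
    intro H hH ε ε'
    have hstate : ∀ δ : Fin (2 * (m + 1)) → ℝ,
        circuitState H ψ₀ δ
          = gate (Matrix.toEuclideanCLM (𝕜 := ℂ) (H ⟨0, by omega⟩)) (1 + δ ⟨0, by omega⟩)
              (gate (Matrix.toEuclideanCLM (𝕜 := ℂ) (H ⟨1, by omega⟩)) (1 + δ ⟨1, by omega⟩)
                (circuitState
                  (fun j : Fin (2 * m) => H ⟨j.1 + 2, by have := j.isLt; omega⟩) ψ₀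
                  (fun j : Fin (2 * m) => δ ⟨j.1 + 2, by have := j.isLt; omega⟩))) := by
      intro δ
      rw [circuitState_eq, circuitState_eq]
      rw [List.ofFn_succ, List.ofFn_succ, List.prod_cons, List.prod_cons]
      rfl
    rw [hstate ε, hstate ε']
    set T₀ := Matrix.toEuclideanCLM (𝕜 := ℂ) (H ⟨0, by omega⟩) with hT₀
    set T₁ := Matrix.toEuclideanCLM (𝕜 := ℂ) (H ⟨1, by omega⟩) with hT₁
    have hsa0 : IsSelfAdjoint T₀ := isSA (hH _)
    have hsa1 : IsSelfAdjoint T₁ := isSA (hH _)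
    set r := circuitState (fun j : Fin (2 * m) => H ⟨j.1 + 2, by have := j.isLt; omega⟩) ψ₀
      (fun j : Fin (2 * m) => ε ⟨j.1 + 2, by have := j.isLt; omega⟩) with hr
    set r' := circuitState (fun j : Fin (2 * m) => H ⟨j.1 + 2, by have := j.isLt; omega⟩) ψ₀
      (fun j : Fin (2 * m) => ε' ⟨j.1 + 2, by have := j.isLt; omega⟩) with hr'
    set a := gate T₀ (1 + ε ⟨0, by omega⟩) with ha
    set a' := gate T₀ (1 + ε' ⟨0, by omega⟩) with ha'
    set b := gate T₁ (1 + ε ⟨1, by omega⟩) with hb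
    set b' := gate T₁ (1 + ε' ⟨1, by omega⟩) with hb'
    set D := ‖ε - ε'‖ with hD
    have hD0 : (0 : ℝ) ≤ D := norm_nonneg _
    have hδ : ∀ i, |ε i - ε' i| ≤ D := fun i => by
      have h := norm_le_pi_norm (ε - ε') i
      simpa [Real.norm_eq_abs] using h
    -- triangle inequality
    have tri : ‖a (b r) - a' (b' r')‖ ≤ ‖a (b r) - a (b r')‖ + ‖a (b r') - a' (b' r')‖ := by
      have h := dist_triangle (a (b r)) (a (b r')) (a' (b' r'))
      simpa [dist_eq_norm] using h
    -- first term
    have h1 : ‖a (b r) - a (b r')‖ = ‖r - r'‖ := by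
      calc ‖a (b r) - a (b r')‖ = ‖a (b r - b r')‖ := by rw [map_sub]
        _ = ‖b r - b r'‖ := gate_norm_map hsa0 _ _
        _ = ‖b (r - r')‖ := by rw [map_sub]
        _ = ‖r - r'‖ := gate_norm_map hsa1 _ _
    have hIH := IH (fun j : Fin (2 * m) => H ⟨j.1 + 2, by have := j.isLt; omega⟩)
      (fun j => hH _)
      (fun j : Fin (2 * m) => ε ⟨j.1 + 2, by have := j.isLt; omega⟩)
      (fun j : Fin (2 * m) => ε' ⟨j.1 + 2, by have := j.isLt; omega⟩)
    set St := ∑ i : Fin m, opNorm (Matrix.fromCols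
      ((fun j : Fin (2 * m) => H ⟨j.1 + 2, by have := j.isLt; omega⟩)
        ⟨2 * (i : ℕ), by have := i.isLt; omega⟩)
      ((fun j : Fin (2 * m) => H ⟨j.1 + 2, by have := j.isLt; omega⟩)
        ⟨2 * (i : ℕ) + 1, by have := i.isLt; omega⟩)) with hSt
    have hSt0 : (0 : ℝ) ≤ St := Finset.sum_nonneg fun i _ => norm_nonneg _
    have hDt : ‖(fun j : Fin (2 * m) => ε ⟨j.1 + 2, by have := j.isLt; omega⟩)
        - (fun j : Fin (2 * m) => ε' ⟨j.1 + 2, by have := j.isLt; omega⟩)‖ ≤ D := by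
      rw [pi_norm_le_iff_of_nonneg hD0]
      intro j
      have h := hδ ⟨j.1 + 2, by have := j.isLt; omega⟩
      simpa [Real.norm_eq_abs] using h
    have h1b : ‖r - r'‖ ≤ Real.sqrt 2 * St * D := by
      refine le_trans hIH ?_
      apply mul_le_mul_of_nonneg_left hDt
      positivity
    -- second term
    have hr'1 : ‖r'‖ = 1 := by
      rw [hr', norm_circuitState _ (fun j => hH _), hψ₀]
    set opN₀ := opNorm (Matrix.fromCols (H ⟨0, by omega⟩) (H ⟨1, by omega⟩)) with hopN
    have hopN0 : (0 : ℝ) ≤ opN₀ := norm_nonneg _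
    have hCv : ∀ v : EuclideanSpace ℂ (Fin d),
        ‖(((1 + ε ⟨0, by omega⟩) - (1 + ε' ⟨0, by omega⟩) : ℝ) : ℂ) • T₀ v
          + (((1 + ε ⟨1, by omega⟩) - (1 + ε' ⟨1, by omega⟩) : ℝ) : ℂ) • T₁ v‖
          ≤ (opN₀ * (Real.sqrt 2 * D)) * ‖v‖ := by
      intro v
      have hcb := columns_bound (H ⟨0, by omega⟩) (H ⟨1, by omega⟩)
        ((1 + ε ⟨0, by omega⟩) - (1 + ε' ⟨0, by omega⟩))
        ((1 + ε ⟨1, by omega⟩) - (1 + ε' ⟨1, by omega⟩)) v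
      refine hcb.trans ?_
      apply mul_le_mul_of_nonneg_right _ (norm_nonneg v)
      apply mul_le_mul_of_nonneg_left _ hopN0
      have e1 : (1 + ε ⟨0, by omega⟩) - (1 + ε' ⟨0, by omega⟩)
          = ε ⟨0, by omega⟩ - ε' ⟨0, by omega⟩ := by ring
      have e2 : (1 + ε ⟨1, by omega⟩) - (1 + ε' ⟨1, by omega⟩)
          = ε ⟨1, by omega⟩ - ε' ⟨1, by omega⟩ := by ring
      rw [e1, e2]
      have hle : (ε ⟨0, by omega⟩ - ε' ⟨0, by omega⟩) ^ 2
          + (ε ⟨1, by omega⟩ - ε' ⟨1, by omega⟩) ^ 2 ≤ 2 * D ^ 2 := by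
        have a0 := hδ ⟨0, by omega⟩
        have a1 := hδ ⟨1, by omega⟩
        nlinarith [sq_abs (ε ⟨0, by omega⟩ - ε' ⟨0, by omega⟩),
          sq_abs (ε ⟨1, by omega⟩ - ε' ⟨1, by omega⟩),
          abs_nonneg (ε ⟨0, by omega⟩ - ε' ⟨0, by omega⟩),
          abs_nonneg (ε ⟨1, by omega⟩ - ε' ⟨1, by omega⟩)]
      calc Real.sqrt ((ε ⟨0, by omega⟩ - ε' ⟨0, by omega⟩) ^ 2
            + (ε ⟨1, by omega⟩ - ε' ⟨1, by omega⟩) ^ 2)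
          ≤ Real.sqrt (2 * D ^ 2) := Real.sqrt_le_sqrt hle
        _ = Real.sqrt 2 * D := by
            rw [Real.sqrt_mul (by norm_num), Real.sqrt_sq hD0]
    have h2 : ‖a (b r') - a' (b' r')‖ ≤ opN₀ * (Real.sqrt 2 * D) := by
      have h := pair_diff hsa0 hsa1 (1 + ε ⟨0, by omega⟩) (1 + ε' ⟨0, by omega⟩)
        (1 + ε ⟨1, by omega⟩) (1 + ε' ⟨1, by omega⟩) hCv r'
      rwa [hr'1, mul_one] at h
    -- sum decomposition
    have goalsum : (∑ i : Fin (m + 1), opNorm (Matrix.fromCols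
          (H ⟨2 * (i : ℕ), by have := i.isLt; omega⟩)
          (H ⟨2 * (i : ℕ) + 1, by have := i.isLt; omega⟩)))
        = opN₀ + St := by
      rw [Fin.sum_univ_succ]
      congr 1
      all_goals first
      | rfl
      | (rw [hopN]; congr 2 <;> exact congrArg H (Fin.ext (by simp)))
      | (rw [hSt]; apply Finset.sum_congr rfl; intro i _;
         first
         | rfl
         | (congr 2 <;> exact congrArg H (Fin.ext (by simp [Fin.val_succ]; ring))))
    calc ‖a (b r) - a' (b' r')‖
        ≤ ‖a (b r) - a (b r')‖ + ‖a (b r') - a' (b' r')‖ := tri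
      _ ≤ Real.sqrt 2 * St * D + opN₀ * (Real.sqrt 2 * D) := by
          rw [h1]; exact add_le_add h1b h2
      _ = Real.sqrt 2 * (opN₀ + St) * D := by ring
      _ = Real.sqrt 2 * (∑ i : Fin (m + 1), opNorm (Matrix.fromCols
            (H ⟨2 * (i : ℕ), by have := i.isLt; omega⟩)
            (H ⟨2 * (i : ℕ) + 1, by have := i.isLt; omega⟩))) * D := by
          rw [goalsum]

end PairwiseAux

/-- even-N case of Theorem 3 of the paper: for `N = 2m`, the quantity
`√2·Σ_{i=1}^{m} ‖[H_{2i−1} H_{2i}]‖₂` is a Lipschitz bound of `ψ` w.r.t. the ∞-norm,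
where `[H₁ H₂]` is the horizontal concatenation `Matrix.fromCols H₁ H₂`. -/
theorem pairwise_lipschitz_bound_even {d m N : ℕ} (hN : N = 2 * m)
    (H : Fin N → Matrix (Fin d) (Fin d) ℂ) (hH : ∀ i, (H i).IsHermitian)
    (ψ₀ : EuclideanSpace ℂ (Fin d)) (hψ₀ : ‖ψ₀‖ = 1) (ε ε' : Fin N → ℝ) :
    ‖circuitState H ψ₀ ε - circuitState H ψ₀ ε'‖ ≤
      Real.sqrt 2 *
        (∑ i : Fin m, opNorm (Matrix.fromCols
          (H ⟨2 * (i : ℕ), by have := i.isLt; omega⟩)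
          (H ⟨2 * (i : ℕ) + 1, by have := i.isLt; omega⟩))) * ‖ε - ε'‖ := by
  subst hN
  exact PairwiseAux.key ψ₀ hψ₀ m H hH ε ε'
end

section
/- Let N be odd, let H₁, …, H_N be d×d complex Hermitian matrices, let ψ₀ ∈ ℂ^d be a unit vector, and for ε ∈ ℝ^N define ψ(ε) = exp(−i(1+ε₁)H₁)···exp(−i(1+ε_N)H_N)·ψ₀ (ordered matrix product applied to ψ₀). Then ‖H_N‖₂ + √2·Σ_{i=1}^{(N−1)/2} ‖[H_{2i−1} H_{2i}]‖₂ is a Lipschitz bound of ψ with respect to the ∞-norm, i.e. for all ε, ε′ ∈ ℝ^N: ‖ψ(ε) − ψ(ε′)‖₂ ≤ (‖H_N‖₂ + √2·Σ_{i=1}^{(N−1)/2} ‖[H_{2i−1} H_{2i}]‖₂)·‖ε − ε′‖_∞. -/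
set_option autoImplicit false

open scoped Matrix

/-! ### Auxiliary abstract lemmas on Hilbert-space operators -/

set_option maxHeartbeats 1000000
set_option synthInstance.maxHeartbeats 400000

section Abstract

open NormedSpace
open scoped InnerProductSpace

variable {E : Type*} [NormedAddCommGroup E] [InnerProductSpace ℂ E] [CompleteSpace E]

noncomputable instance instNormedAlgebraRatCLM : NormedAlgebra ℚ (E →L[ℂ] E) :=
  NormedAlgebra.restrictScalars ℚ ℂ (E →L[ℂ] E)

lemma sa_exp_isometry (A : E →L[ℂ] E) (hA : IsSelfAdjoint A) (r : ℝ) (x : E) :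
    ‖exp ((-Complex.I * (r:ℂ)) • A) x‖ = ‖x‖ := by
  set M := (-Complex.I * (r:ℂ)) • A with hM
  have hstar : star M = -M := by
    rw [hM, star_smul, hA.star_eq, ← neg_smul]
    congr 1
    simp [Complex.ext_iff]
  have hU : star (exp M) * exp M = 1 := by
    rw [star_exp, hstar, ← exp_add_of_commute ((Commute.refl M).neg_left)]
    simp
  have h2 : ⟪exp M x, exp M x⟫_ℂ = ⟪x, x⟫_ℂ := by
    have h3 := ContinuousLinearMap.adjoint_inner_left (𝕜 := ℂ) (exp M) x (exp M x)
    have h4 : (ContinuousLinearMap.adjoint (exp M)) ((exp M) x) = x := by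
      rw [← ContinuousLinearMap.star_eq_adjoint, ← ContinuousLinearMap.mul_apply, hU,
        ContinuousLinearMap.one_apply]
    rw [h4] at h3
    exact h3.symm
  have h5 : ‖exp M x‖ ^ 2 = ‖x‖ ^ 2 := by
    have := h2
    rw [inner_self_eq_norm_sq_to_K, inner_self_eq_norm_sq_to_K] at this
    exact_mod_cast this
  calc ‖exp M x‖ = Real.sqrt (‖exp M x‖ ^ 2) := (Real.sqrt_sq (norm_nonneg _)).symm
  _ = Real.sqrt (‖x‖ ^ 2) := by rw [h5]
  _ = ‖x‖ := Real.sqrt_sq (norm_nonneg _)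

lemma pair_exp_sub_id (A B : E →L[ℂ] E) (hA : IsSelfAdjoint A) (hB : IsSelfAdjoint B)
    {C : ℝ}
    (hC : ∀ (s' t' : ℝ) (v : E),
      ‖(((s':ℂ)) • A + ((t':ℂ)) • B) v‖ ≤ Real.sqrt (s'^2+t'^2) * C * ‖v‖)
    (s t : ℝ) (x : E) :
    ‖(exp ((-Complex.I * (s:ℂ)) • A) * exp ((-Complex.I * (t:ℂ)) • B)) x - x‖
      ≤ Real.sqrt (s^2+t^2) * C * ‖x‖ := by
  set M₁ := (-Complex.I * (s:ℂ)) • A with hM₁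
  set M₂ := (-Complex.I * (t:ℂ)) • B with hM₂
  set f : ℝ → E := fun v => (exp ((v:ℂ) • M₁) * exp ((v:ℂ) • M₂)) x with hf
  set f' : ℝ → E := fun u =>
    (((exp ((u:ℂ) • M₁) * M₁) * exp ((u:ℂ) • M₂)
      + exp ((u:ℂ) • M₁) * (M₂ * exp ((u:ℂ) • M₂)))) x with hf'
  have hderiv : ∀ u : ℝ, HasDerivAt f (f' u) u := by
    intro u
    have h1 : HasDerivAt (fun z : ℂ => exp (z • M₁) * exp (z • M₂))
        ((exp ((u:ℂ) • M₁) * M₁) * exp ((u:ℂ) • M₂)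
          + exp ((u:ℂ) • M₁) * (M₂ * exp ((u:ℂ) • M₂))) (u:ℂ) :=
      (hasDerivAt_exp_smul_const M₁ ((u:ℂ))).mul (hasDerivAt_exp_smul_const' M₂ ((u:ℂ)))
    have h2 := HasDerivAt.scomp (x := u) h1 Complex.ofRealCLM.hasDerivAt
    simp only [Function.comp_def, one_smul, Complex.ofRealCLM_apply] at h2
    have h3 := ((ContinuousLinearMap.apply ℂ E x).hasFDerivAt.restrictScalars ℝ).comp_hasDerivAt u h2
    simpa [hf, hf', Function.comp_def] using h3
  have hsc1 : ∀ u : ℝ, (u:ℂ) • M₁ = (-Complex.I * ((u*s : ℝ):ℂ)) • A := by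
    intro u; rw [hM₁, smul_smul]; congr 1; push_cast; ring
  have hsc2 : ∀ u : ℝ, (u:ℂ) • M₂ = (-Complex.I * ((u*t : ℝ):ℂ)) • B := by
    intro u; rw [hM₂, smul_smul]; congr 1; push_cast; ring
  have hbound : ∀ u : ℝ, ‖f' u‖ ≤ Real.sqrt (s^2+t^2) * C * ‖x‖ := by
    intro u
    have hM12 : M₁ + M₂ = (-Complex.I) • ((s:ℂ) • A + (t:ℂ) • B) := by
      rw [hM₁, hM₂, smul_add, smul_smul, smul_smul]
    have factor : f' u = exp ((u:ℂ) • M₁) ((M₁ + M₂) (exp ((u:ℂ) • M₂) x)) := by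
      simp [hf', ContinuousLinearMap.mul_apply, ContinuousLinearMap.add_apply, map_add]
    rw [factor, hsc1 u]
    rw [sa_exp_isometry A hA (u*s)]
    rw [hM12]
    rw [ContinuousLinearMap.smul_apply, norm_smul]
    simp only [norm_neg, Complex.norm_I, one_mul]
    calc ‖((s:ℂ) • A + (t:ℂ) • B) (exp ((u:ℂ) • M₂) x)‖
        ≤ Real.sqrt (s^2+t^2) * C * ‖exp ((u:ℂ) • M₂) x‖ := hC s t _
      _ = Real.sqrt (s^2+t^2) * C * ‖x‖ := by rw [hsc2 u, sa_exp_isometry B hB (u*t)]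
  have key := Convex.norm_image_sub_le_of_norm_hasDerivWithin_le
    (f := f) (f' := f') (C := Real.sqrt (s^2+t^2) * C * ‖x‖) (s := Set.Icc (0:ℝ) 1)
    (fun u _ => (hderiv u).hasDerivWithinAt) (fun u _ => hbound u) (convex_Icc 0 1)
    (Set.left_mem_Icc.2 zero_le_one) (Set.right_mem_Icc.2 zero_le_one)
  have hf1 : f 1 = (exp M₁ * exp M₂) x := by rw [hf]; norm_num
  have hf0 : f 0 = x := by rw [hf]; norm_num
  rw [hf1, hf0] at key
  simpa using key

lemma single_exp_sub_id (A : E →L[ℂ] E) (hA : IsSelfAdjoint A) {C : ℝ} (hC0 : 0 ≤ C)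
    (hC : ∀ v : E, ‖A v‖ ≤ C * ‖v‖) (s : ℝ) (x : E) :
    ‖exp ((-Complex.I * (s:ℂ)) • A) x - x‖ ≤ |s| * C * ‖x‖ := by
  have hC' : ∀ (s' t' : ℝ) (v : E),
      ‖(((s':ℂ)) • A + ((t':ℂ)) • (0 : E →L[ℂ] E)) v‖ ≤ Real.sqrt (s'^2+t'^2) * C * ‖v‖ := by
    intro s' t' v
    rw [smul_zero, add_zero, ContinuousLinearMap.smul_apply, norm_smul]
    have h1 : ‖(s' : ℂ)‖ = |s'| := by rw [Complex.norm_real, Real.norm_eq_abs]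
    rw [h1]
    have h2 : |s'| ≤ Real.sqrt (s'^2+t'^2) := by
      rw [← Real.sqrt_sq_eq_abs]
      exact Real.sqrt_le_sqrt (by nlinarith [sq_nonneg t'])
    calc |s'| * ‖A v‖ ≤ |s'| * (C * ‖v‖) := mul_le_mul_of_nonneg_left (hC v) (abs_nonneg _)
      _ ≤ Real.sqrt (s'^2+t'^2) * (C * ‖v‖) :=
          mul_le_mul_of_nonneg_right h2 (by positivity)
      _ = Real.sqrt (s'^2+t'^2) * C * ‖v‖ := by ring
  have h := pair_exp_sub_id A 0 hA (by simp [IsSelfAdjoint]) hC' s 0 x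
  have h0 : exp ((-Complex.I * ((0:ℝ):ℂ)) • (0 : E →L[ℂ] E)) = 1 := by
    simp [exp_zero]
  rw [h0, mul_one] at h
  have hs0 : Real.sqrt (s^2+(0:ℝ)^2) = |s| := by
    rw [show s^2+(0:ℝ)^2 = s^2 by ring, Real.sqrt_sq_eq_abs]
  rwa [hs0] at h

/-- The gate product `exp(−i(1+ε₀)A₀) ⋯ exp(−i(1+ε_{n-1})A_{n-1})`. -/
noncomputable def gateProd (A : ℕ → E →L[ℂ] E) (ε : ℕ → ℝ) (n : ℕ) : E →L[ℂ] E :=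
  ((List.range n).map (fun i => exp ((-Complex.I * (1 + (ε i : ℂ))) • A i))).prod

lemma gateProd_succ_left (A : ℕ → E →L[ℂ] E) (ε : ℕ → ℝ) (n : ℕ) :
    gateProd A ε (n+1) = exp ((-Complex.I * (1 + (ε 0 : ℂ))) • A 0) *
      gateProd (fun i => A (i+1)) (fun i => ε (i+1)) n := by
  unfold gateProd
  rw [List.range_succ_eq_map, List.map_cons, List.prod_cons, List.map_map]
  rfl

lemma gateProd_succ (A : ℕ → E →L[ℂ] E) (ε : ℕ → ℝ) (n : ℕ) :
    gateProd A ε (n+1) = gateProd A ε n * exp ((-Complex.I * (1 + (ε n : ℂ))) • A n) := by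
  unfold gateProd
  rw [List.range_succ, List.map_append, List.prod_append]
  simp

lemma gate_scalar_eq (c : ℝ) : (-Complex.I * (1 + (c:ℂ))) = (-Complex.I * (((1+c : ℝ)):ℂ)) := by
  push_cast; ring

lemma gate_isometry (A : E →L[ℂ] E) (hA : IsSelfAdjoint A) (c : ℝ) (x : E) :
    ‖exp ((-Complex.I * (1 + (c:ℂ))) • A) x‖ = ‖x‖ := by
  rw [gate_scalar_eq, sa_exp_isometry A hA (1+c) x]

lemma gateProd_isometry (A : ℕ → E →L[ℂ] E) (hA : ∀ i, IsSelfAdjoint (A i)) (ε : ℕ → ℝ) :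
    ∀ n x, ‖gateProd A ε n x‖ = ‖x‖ := by
  intro n
  induction n with
  | zero => intro x; simp [gateProd]
  | succ n ih =>
    intro x
    rw [gateProd_succ, ContinuousLinearMap.mul_apply, ih, gate_isometry _ (hA n)]

lemma gate_split (A : E →L[ℂ] E) (a a' : ℝ) :
    exp ((-Complex.I * (1 + (a:ℂ))) • A)
      = exp ((-Complex.I * (1 + (a':ℂ))) • A)
        * exp ((-Complex.I * ((a - a' : ℝ):ℂ)) • A) := by
  rw [← exp_add_of_commute (((Commute.refl A).smul_left _).smul_right _), ← add_smul]
  congr 2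
  push_cast; ring

lemma gate_split_left (A : E →L[ℂ] E) (a a' : ℝ) :
    exp ((-Complex.I * (1 + (a:ℂ))) • A)
      = exp ((-Complex.I * ((a - a' : ℝ):ℂ)) • A)
        * exp ((-Complex.I * (1 + (a':ℂ))) • A) := by
  rw [← exp_add_of_commute (((Commute.refl A).smul_left _).smul_right _), ← add_smul]
  congr 2
  push_cast; ring

lemma pair_gate_diff (A B : E →L[ℂ] E) (hA : IsSelfAdjoint A) (hB : IsSelfAdjoint B)
    {C : ℝ}
    (hC : ∀ (s' t' : ℝ) (v : E),
      ‖(((s':ℂ)) • A + ((t':ℂ)) • B) v‖ ≤ Real.sqrt (s'^2+t'^2) * C * ‖v‖)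
    (a b a' b' : ℝ) (y : E) :
    ‖(exp ((-Complex.I * (1 + (a:ℂ))) • A) * exp ((-Complex.I * (1 + (b:ℂ))) • B)) y
      - (exp ((-Complex.I * (1 + (a':ℂ))) • A) * exp ((-Complex.I * (1 + (b':ℂ))) • B)) y‖
      ≤ Real.sqrt ((a-a')^2 + (b-b')^2) * C * ‖y‖ := by
  set Fa := exp ((-Complex.I * ((a - a' : ℝ):ℂ)) • A) with hFa
  set Fb := exp ((-Complex.I * ((b - b' : ℝ):ℂ)) • B) with hFb
  set Ea' := exp ((-Complex.I * (1 + (a':ℂ))) • A) with hEa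
  set Eb' := exp ((-Complex.I * (1 + (b':ℂ))) • B) with hEb
  have key : (exp ((-Complex.I * (1 + (a:ℂ))) • A) * exp ((-Complex.I * (1 + (b:ℂ))) • B)) y
      - (Ea' * Eb') y = Ea' ((Fa * Fb) (Eb' y) - Eb' y) := by
    rw [gate_split A a a', gate_split_left B b b', ← hFa, ← hFb, ← hEa, ← hEb]
    simp only [ContinuousLinearMap.mul_apply, map_sub]
  rw [key]
  rw [show ((-Complex.I * (1 + (a':ℂ))) • A) = ((-Complex.I * (((1+a':ℝ)):ℂ)) • A) by
    push_cast; ring_nf] at hEa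
  rw [hEa, sa_exp_isometry A hA (1+a')]
  calc ‖(Fa * Fb) (Eb' y) - Eb' y‖
      ≤ Real.sqrt ((a-a')^2 + (b-b')^2) * C * ‖Eb' y‖ := by
        rw [hFa, hFb]; exact pair_exp_sub_id A B hA hB hC (a-a') (b-b') (Eb' y)
    _ = Real.sqrt ((a-a')^2 + (b-b')^2) * C * ‖y‖ := by
        rw [hEb, gate_isometry B hB b' y]

lemma key_induction : ∀ (mm : ℕ) (A : ℕ → E →L[ℂ] E), (∀ i, IsSelfAdjoint (A i)) →
    ∀ (C : ℕ → ℝ) (Cl b : ℝ), 0 ≤ b → 0 ≤ Cl → (∀ k, 0 ≤ C k) →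
    (∀ k, k < mm → ∀ (s t : ℝ) (v : E),
      ‖(((s:ℂ)) • A (2*k) + ((t:ℂ)) • A (2*k+1)) v‖ ≤ Real.sqrt (s^2+t^2) * C k * ‖v‖) →
    (∀ v : E, ‖A (2*mm) v‖ ≤ Cl * ‖v‖) →
    ∀ (ε ε' : ℕ → ℝ), (∀ i, |ε i - ε' i| ≤ b) →
    ∀ x : E, ‖gateProd A ε (2*mm+1) x - gateProd A ε' (2*mm+1) x‖
      ≤ (Cl + Real.sqrt 2 * ∑ k ∈ Finset.range mm, C k) * b * ‖x‖ := by
  intro mm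
  induction mm with
  | zero =>
    intro A hA C Cl b hb hCl hC0 hpair hlast ε ε' hδ x
    simp only [Finset.range_zero, Finset.sum_empty, mul_zero, add_zero]
    have h1 : gateProd A ε 1 = exp ((-Complex.I * (1 + (ε 0 : ℂ))) • A 0) := by
      rw [gateProd_succ_left]; simp [gateProd]
    have h2 : gateProd A ε' 1 = exp ((-Complex.I * (1 + (ε' 0 : ℂ))) • A 0) := by
      rw [gateProd_succ_left]; simp [gateProd]
    rw [h1, h2, gate_split (A 0) (ε 0) (ε' 0)]
    rw [ContinuousLinearMap.mul_apply]
    have h3 : exp ((-Complex.I * (1 + (ε' 0 : ℂ))) • A 0)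
        (exp ((-Complex.I * ((ε 0 - ε' 0 : ℝ):ℂ)) • A 0) x)
        - exp ((-Complex.I * (1 + (ε' 0 : ℂ))) • A 0) x
        = exp ((-Complex.I * (1 + (ε' 0 : ℂ))) • A 0)
          (exp ((-Complex.I * ((ε 0 - ε' 0 : ℝ):ℂ)) • A 0) x - x) := by
      rw [map_sub]
    rw [h3, gate_isometry _ (hA 0)]
    calc ‖exp ((-Complex.I * ((ε 0 - ε' 0 : ℝ):ℂ)) • A 0) x - x‖
        ≤ |ε 0 - ε' 0| * Cl * ‖x‖ := single_exp_sub_id (A 0) (hA 0) hCl hlast _ x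
      _ ≤ Cl * b * ‖x‖ := by
          have h5 := hδ 0
          have h4 : |ε 0 - ε' 0| * Cl ≤ b * Cl := mul_le_mul_of_nonneg_right h5 hCl
          nlinarith [norm_nonneg x]
  | succ mm ih =>
    intro A hA C Cl b hb hCl hC0 hpair hlast ε ε' hδ x
    set A2 : ℕ → E →L[ℂ] E := fun i => A (i+2) with hA2
    set ε2 : ℕ → ℝ := fun i => ε (i+2) with hε2
    set ε2' : ℕ → ℝ := fun i => ε' (i+2) with hε2'
    have hA2sa : ∀ i, IsSelfAdjoint (A2 i) := fun i => hA (i+2)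
    have hsplit : ∀ (η : ℕ → ℝ), gateProd A η (2*(mm+1)+1)
        = exp ((-Complex.I * (1 + (η 0 : ℂ))) • A 0) *
          (exp ((-Complex.I * (1 + (η 1 : ℂ))) • A 1) *
            gateProd A2 (fun i => η (i+2)) (2*mm+1)) := by
      intro η
      rw [show 2*(mm+1)+1 = ((2*mm+1)+1)+1 by ring]
      rw [gateProd_succ_left, gateProd_succ_left]
    rw [hsplit ε, hsplit ε']
    set R := gateProd A2 ε2 (2*mm+1) with hR
    set R' := gateProd A2 ε2' (2*mm+1) with hR'
    set G0 := exp ((-Complex.I * (1 + (ε 0 : ℂ))) • A 0) with hG0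
    set G1 := exp ((-Complex.I * (1 + (ε 1 : ℂ))) • A 1) with hG1
    set G0' := exp ((-Complex.I * (1 + (ε' 0 : ℂ))) • A 0) with hG0'
    set G1' := exp ((-Complex.I * (1 + (ε' 1 : ℂ))) • A 1) with hG1'
    have hre : (G0 * (G1 * R)) x - (G0' * (G1' * R')) x
        = ((G0 * G1) (R x) - (G0' * G1') (R x)) + (G0' * G1') (R x - R' x) := by
      simp only [ContinuousLinearMap.mul_apply, map_sub]
      abel
    rw [hre]
    have hT1 : ‖(G0 * G1) (R x) - (G0' * G1') (R x)‖
        ≤ Real.sqrt 2 * C 0 * b * ‖x‖ := by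
      have hp := pair_gate_diff (A 0) (A 1) (hA 0) (hA 1)
        (hpair 0 (Nat.succ_pos _)) (ε 0) (ε 1) (ε' 0) (ε' 1) (R x)
      have hRx : ‖R x‖ = ‖x‖ := gateProd_isometry A2 hA2sa ε2 _ x
      rw [hRx] at hp
      refine hp.trans ?_
      have hs : Real.sqrt ((ε 0 - ε' 0)^2 + (ε 1 - ε' 1)^2) ≤ Real.sqrt 2 * b := by
        have h1 := hδ 0
        have h2 := hδ 1
        have h3 : (ε 0 - ε' 0)^2 + (ε 1 - ε' 1)^2 ≤ 2 * b^2 := by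
          nlinarith [abs_nonneg (ε 0 - ε' 0), abs_nonneg (ε 1 - ε' 1), sq_abs (ε 0 - ε' 0),
            sq_abs (ε 1 - ε' 1)]
        calc Real.sqrt ((ε 0 - ε' 0)^2 + (ε 1 - ε' 1)^2) ≤ Real.sqrt (2 * b^2) :=
              Real.sqrt_le_sqrt h3
          _ = Real.sqrt 2 * b := by
              rw [Real.sqrt_mul (by norm_num), Real.sqrt_sq hb]
      have h6 := mul_le_mul_of_nonneg_right (mul_le_mul_of_nonneg_right hs (hC0 0)) (norm_nonneg x)
      calc Real.sqrt ((ε 0 - ε' 0)^2 + (ε 1 - ε' 1)^2) * C 0 * ‖x‖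
          ≤ Real.sqrt 2 * b * C 0 * ‖x‖ := h6
        _ = Real.sqrt 2 * C 0 * b * ‖x‖ := by ring
    have hT2 : ‖(G0' * G1') (R x - R' x)‖
        ≤ (Cl + Real.sqrt 2 * ∑ k ∈ Finset.range mm, C (k+1)) * b * ‖x‖ := by
      rw [ContinuousLinearMap.mul_apply, hG0', gate_isometry _ (hA 0), hG1',
        gate_isometry _ (hA 1)]
      exact ih A2 hA2sa (fun k => C (k+1)) Cl b hb hCl (fun k => hC0 (k+1))
        (fun k hk s t v => hpair (k+1) (by omega) s t v)
        (fun v => hlast v) ε2 ε2' (fun i => hδ (i+2)) x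
    calc ‖((G0 * G1) (R x) - (G0' * G1') (R x)) + (G0' * G1') (R x - R' x)‖
        ≤ ‖(G0 * G1) (R x) - (G0' * G1') (R x)‖ + ‖(G0' * G1') (R x - R' x)‖ := norm_add_le _ _
      _ ≤ Real.sqrt 2 * C 0 * b * ‖x‖
          + (Cl + Real.sqrt 2 * ∑ k ∈ Finset.range mm, C (k+1)) * b * ‖x‖ := add_le_add hT1 hT2
      _ = (Cl + Real.sqrt 2 * ∑ k ∈ Finset.range (mm+1), C k) * b * ‖x‖ := by
          rw [Finset.sum_range_succ']
          ring

end Abstract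

/-! ### Matrix-level auxiliary lemmas -/

section MatrixLemmas

open NormedSpace

lemma opNorm_nonneg' {m n : Type*} [Fintype m] [Fintype n] [DecidableEq n]
    (A : Matrix m n ℂ) : 0 ≤ opNorm A := norm_nonneg _

lemma toEuclideanCLM_apply_eq {d : ℕ} (M : Matrix (Fin d) (Fin d) ℂ)
    (v : EuclideanSpace ℂ (Fin d)) :
    Matrix.toEuclideanCLM (𝕜 := ℂ) M v = Matrix.toEuclideanLin M v := rfl

lemma norm_toEuclideanLin_apply_le {d : ℕ} {e : Type*} [Fintype e] [DecidableEq e]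
    (M : Matrix (Fin d) e ℂ) (v : EuclideanSpace ℂ e) :
    ‖Matrix.toEuclideanLin M v‖ ≤ opNorm M * ‖v‖ :=
  (LinearMap.toContinuousLinearMap (Matrix.toEuclideanLin M)).le_opNorm v

lemma smul_add_smul_norm_le {d : ℕ} (B₁ B₂ : Matrix (Fin d) (Fin d) ℂ) (s t : ℝ)
    (v : EuclideanSpace ℂ (Fin d)) :
    ‖((s:ℂ) • Matrix.toEuclideanCLM (𝕜:=ℂ) B₁ + (t:ℂ) • Matrix.toEuclideanCLM (𝕜:=ℂ) B₂) v‖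
      ≤ Real.sqrt (s^2+t^2) * opNorm (Matrix.fromCols B₁ B₂) * ‖v‖ := by
  set v' : Fin d → ℂ := WithLp.equiv 2 _ v with hv'
  set w : EuclideanSpace ℂ (Fin d ⊕ Fin d) :=
    (WithLp.equiv 2 _).symm (Sum.elim (fun a => (s:ℂ) * v' a) (fun a => (t:ℂ) * v' a)) with hw
  have hkey : ((s:ℂ) • Matrix.toEuclideanCLM (𝕜:=ℂ) B₁
        + (t:ℂ) • Matrix.toEuclideanCLM (𝕜:=ℂ) B₂) v
      = Matrix.toEuclideanLin (Matrix.fromCols B₁ B₂) w := by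
    ext j
    simp [WithLp.equiv_symm_apply, toEuclideanCLM_apply_eq, Matrix.toEuclideanLin_apply, Matrix.mulVec, dotProduct,
      Matrix.fromCols, Fintype.sum_sum_type, Finset.mul_sum, hw, hv', mul_comm, mul_left_comm]
  have hwnorm : ‖w‖ = Real.sqrt (s^2+t^2) * ‖v‖ := by
    rw [EuclideanSpace.norm_eq, EuclideanSpace.norm_eq, ← Real.sqrt_mul (by positivity)]
    congr 1
    simp only [hw, WithLp.equiv_symm_apply, PiLp.toLp_apply, Fintype.sum_sum_type, Sum.elim_inl, Sum.elim_inr,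
      norm_mul, mul_pow, Complex.norm_real, Real.norm_eq_abs, sq_abs]
    rw [← Finset.mul_sum, ← Finset.mul_sum, ← add_mul]
    rfl
  rw [hkey]
  calc ‖Matrix.toEuclideanLin (Matrix.fromCols B₁ B₂) w‖
      ≤ opNorm (Matrix.fromCols B₁ B₂) * ‖w‖ := norm_toEuclideanLin_apply_le _ w
    _ = Real.sqrt (s^2+t^2) * opNorm (Matrix.fromCols B₁ B₂) * ‖v‖ := by
        rw [hwnorm]; ring

lemma circuitState_eq_gateProd {d N : ℕ} (H : Fin N → Matrix (Fin d) (Fin d) ℂ)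
    (ψ₀ : EuclideanSpace ℂ (Fin d)) (ε : Fin N → ℝ) :
    circuitState H ψ₀ ε = gateProd
      (fun i => if h : i < N then Matrix.toEuclideanCLM (𝕜:=ℂ) (H ⟨i,h⟩) else 0)
      (fun i => if h : i < N then ε ⟨i,h⟩ else 0) N ψ₀ := by
  classical
  letI : SeminormedRing (Matrix (Fin d) (Fin d) ℂ) := Matrix.linftyOpSemiNormedRing
  letI : NormedRing (Matrix (Fin d) (Fin d) ℂ) := Matrix.linftyOpNormedRing
  letI : NormedAlgebra ℂ (Matrix (Fin d) (Fin d) ℂ) := Matrix.linftyOpNormedAlgebra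
  letI : NormedAlgebra ℚ (Matrix (Fin d) (Fin d) ℂ) := NormedAlgebra.restrictScalars ℚ ℂ _
  set φ := Matrix.toEuclideanCLM (𝕜:=ℂ) (n := Fin d) with hφ
  have hφlin : ∃ L : Matrix (Fin d) (Fin d) ℂ →ₗ[ℂ]
      (EuclideanSpace ℂ (Fin d) →L[ℂ] EuclideanSpace ℂ (Fin d)), ⇑L = ⇑φ :=
    ⟨{ toFun := ⇑φ, map_add' := fun a b => map_add φ a b,
       map_smul' := fun c a => map_smul φ c a }, rfl⟩
  obtain ⟨L, hL⟩ := hφlin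
  have hφcont : Continuous ⇑φ := hL ▸ L.continuous_of_finiteDimensional
  unfold circuitState gateProd
  have h1 : Matrix.toEuclideanLin
      (List.ofFn fun i => exp ((-Complex.I * (1 + (ε i : ℂ))) • H i)).prod ψ₀
      = (φ (List.ofFn fun i => exp ((-Complex.I * (1 + (ε i : ℂ))) • H i)).prod) ψ₀ := rfl
  rw [h1, map_list_prod φ]
  congr 1
  have hfr : (List.finRange N).map Fin.val = List.range N := List.ext_getElem (by simp) (by simp)
  rw [List.map_ofFn, List.ofFn_eq_map, ← hfr, List.map_map]
  congr 1
  refine List.map_congr_left fun i _ => ?_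
  show φ (exp ((-Complex.I * (1 + (ε i : ℂ))) • H i)) = _
  refine (map_exp φ hφcont _).trans ?_
  rw [map_smul φ]
  simp only [Function.comp_apply]
  rw [dif_pos i.isLt, dif_pos i.isLt]

end MatrixLemmas

theorem pairwise_lipschitz_bound_odd {d m N : ℕ} (hN : N = 2 * m + 1)
    (H : Fin N → Matrix (Fin d) (Fin d) ℂ) (hH : ∀ i, (H i).IsHermitian)
    (ψ₀ : EuclideanSpace ℂ (Fin d)) (hψ₀ : ‖ψ₀‖ = 1) (ε ε' : Fin N → ℝ) :
    ‖circuitState H ψ₀ ε - circuitState H ψ₀ ε'‖ ≤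
      (opNorm (H ⟨2 * m, by omega⟩) +
        Real.sqrt 2 *
          ∑ i : Fin m, opNorm (Matrix.fromCols
            (H ⟨2 * (i : ℕ), by have := i.isLt; omega⟩)
            (H ⟨2 * (i : ℕ) + 1, by have := i.isLt; omega⟩))) * ‖ε - ε'‖ := by
  subst hN
  classical
  set A : ℕ → (EuclideanSpace ℂ (Fin d) →L[ℂ] EuclideanSpace ℂ (Fin d)) :=
    fun i => if h : i < 2*m+1 then Matrix.toEuclideanCLM (𝕜:=ℂ) (H ⟨i,h⟩) else 0 with hA
  set εn : ℕ → ℝ := fun i => if h : i < 2*m+1 then ε ⟨i,h⟩ else 0 with hεn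
  set εn' : ℕ → ℝ := fun i => if h : i < 2*m+1 then ε' ⟨i,h⟩ else 0 with hεn'
  have hAsa : ∀ i, IsSelfAdjoint (A i) := by
    intro i
    rw [hA]
    dsimp only
    split
    · next h => exact ((hH ⟨i,h⟩).isSelfAdjoint).map _
    · exact IsSelfAdjoint.zero (EuclideanSpace ℂ (Fin d) →L[ℂ] EuclideanSpace ℂ (Fin d))
  set C : ℕ → ℝ := fun k => if h : 2*k+1 < 2*m+1 then
      opNorm (Matrix.fromCols (H ⟨2*k, by omega⟩) (H ⟨2*k+1, h⟩)) else 0 with hC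
  set Cl : ℝ := opNorm (H ⟨2*m, by omega⟩) with hCl
  set b : ℝ := ‖ε - ε'‖ with hb
  have hC0 : ∀ k, 0 ≤ C k := by
    intro k
    rw [hC]
    dsimp only
    split
    · exact opNorm_nonneg' _
    · exact le_refl 0
  have hpair : ∀ k, k < m → ∀ (s t : ℝ) (v : EuclideanSpace ℂ (Fin d)),
      ‖(((s:ℂ)) • A (2*k) + ((t:ℂ)) • A (2*k+1)) v‖ ≤ Real.sqrt (s^2+t^2) * C k * ‖v‖ := by
    intro k hk s t v
    have h1 : 2*k < 2*m+1 := by omega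
    have h2 : 2*k+1 < 2*m+1 := by omega
    rw [hA, hC]
    dsimp only
    rw [dif_pos h1, dif_pos h2, dif_pos h2]
    exact smul_add_smul_norm_le _ _ s t v
  have hlast : ∀ v : EuclideanSpace ℂ (Fin d), ‖A (2*m) v‖ ≤ Cl * ‖v‖ := by
    intro v
    have h1 : 2*m < 2*m+1 := by omega
    rw [hA]
    dsimp only
    rw [dif_pos h1]
    rw [toEuclideanCLM_apply_eq]
    exact norm_toEuclideanLin_apply_le _ v
  have hδ : ∀ i, |εn i - εn' i| ≤ b := by
    intro i
    rw [hεn, hεn']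
    dsimp only
    split
    · next h =>
      have h1 : ε ⟨i,h⟩ - ε' ⟨i,h⟩ = (ε - ε') ⟨i,h⟩ := by simp [Pi.sub_apply]
      rw [h1, ← Real.norm_eq_abs]
      exact norm_le_pi_norm (ε - ε') ⟨i,h⟩
    · rw [sub_self, abs_zero, hb]
      exact norm_nonneg _
  have main := key_induction m A hAsa C Cl b (norm_nonneg _) (opNorm_nonneg' _) hC0 hpair hlast
    εn εn' hδ ψ₀
  rw [circuitState_eq_gateProd H ψ₀ ε, circuitState_eq_gateProd H ψ₀ ε']
  rw [hψ₀, mul_one] at main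
  have hsum : ∑ k ∈ Finset.range m, C k = ∑ i : Fin m, opNorm (Matrix.fromCols
      (H ⟨2 * (i : ℕ), by have := i.isLt; omega⟩)
      (H ⟨2 * (i : ℕ) + 1, by have := i.isLt; omega⟩)) := by
    rw [← Fin.sum_univ_eq_sum_range]
    refine Finset.sum_congr rfl fun i _ => ?_
    rw [hC]
    dsimp only
    rw [dif_pos (by have := i.isLt; omega : 2*(i:ℕ)+1 < 2*m+1)]
  rw [hsum] at main
  exact main
end

section
/- Let H₁, H₂, H₃, H₄ be d×d complex Hermitian matrices, let ψ₀ ∈ ℂ^d be a unit vector, and for ε ∈ ℝ⁴ define ψ(ε) = exp(−i(1+ε₁)H₁)·exp(−i(1+ε₂)H₂)·exp(−i(1+ε₃)H₃)·exp(−i(1+ε₄)H₄)·ψ₀. Then ‖H₁‖₂ + √2·‖[H₂ H₃]‖₂ + ‖H₄‖₂ is a Lipschitz bound of ψ with respect to the ∞-norm, i.e. for all ε, ε′ ∈ ℝ⁴: ‖ψ(ε) − ψ(ε′)‖₂ ≤ (‖H₁‖₂ + √2·‖[H₂ H₃]‖₂ + ‖H₄‖₂)·‖ε − ε′‖_∞.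 -/
set_option autoImplicit false

open scoped Matrix

namespace MixedBlockAux

open Matrix

set_option maxHeartbeats 1000000

variable {d : ℕ}

/-- Matrices as continuous linear maps on Euclidean space. -/
noncomputable def Mc (A : Matrix (Fin d) (Fin d) ℂ) :
    EuclideanSpace ℂ (Fin d) →L[ℂ] EuclideanSpace ℂ (Fin d) :=
  Matrix.toEuclideanCLM (𝕜 := ℂ) A

lemma opNorm_eq_Mc (A : Matrix (Fin d) (Fin d) ℂ) : opNorm A = ‖Mc A‖ := rfl

lemma Mc_mul (A B : Matrix (Fin d) (Fin d) ℂ) : Mc (A * B) = Mc A * Mc B := map_mul _ A B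

lemma Mc_smul (c : ℂ) (A : Matrix (Fin d) (Fin d) ℂ) : Mc (c • A) = c • Mc A := map_smul _ c A

lemma Mc_star (A : Matrix (Fin d) (Fin d) ℂ) : Mc (star A) = star (Mc A) := map_star _ A

lemma Mc_cont : Continuous (Mc (d := d)) :=
  LinearMap.continuous_of_finiteDimensional
    (⟨⟨Mc, fun A B => map_add _ A B⟩, fun c A => map_smul _ c A⟩ :
      Matrix (Fin d) (Fin d) ℂ →ₗ[ℂ] _)

lemma Mc_exp (A : Matrix (Fin d) (Fin d) ℂ) :
    Mc (NormedSpace.exp A) = NormedSpace.exp (Mc A) := by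
  letI : SeminormedRing (Matrix (Fin d) (Fin d) ℂ) := Matrix.linftyOpSemiNormedRing
  letI : NormedRing (Matrix (Fin d) (Fin d) ℂ) := Matrix.linftyOpNormedRing
  letI : NormedAlgebra ℂ (Matrix (Fin d) (Fin d) ℂ) := Matrix.linftyOpNormedAlgebra
  letI : CompleteSpace (Matrix (Fin d) (Fin d) ℂ) := FiniteDimensional.complete ℂ _
  letI : NormedAlgebra ℚ (Matrix (Fin d) (Fin d) ℂ) := NormedAlgebra.restrictScalars ℚ ℂ _
  exact NormedSpace.map_exp (Matrix.toEuclideanCLM (𝕜 := ℂ) (n := Fin d)) Mc_cont A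

lemma Mc_selfadjoint {A : Matrix (Fin d) (Fin d) ℂ} (hA : A.IsHermitian) :
    star (Mc A) = Mc A := by
  rw [← Mc_star, Matrix.star_eq_conjTranspose, hA.eq]

lemma exp_isometry {A : Matrix (Fin d) (Fin d) ℂ} (hA : A.IsHermitian) {c : ℂ}
    (hc : star c = -c) (x : EuclideanSpace ℂ (Fin d)) :
    ‖NormedSpace.exp (c • Mc A) x‖ = ‖x‖ := by
  set T := Mc A with hT
  have hTs : star T = T := Mc_selfadjoint hA
  set U := NormedSpace.exp (c • T) with hU
  have h1 : star U * U = 1 := by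
    letI : NormedAlgebra ℚ (EuclideanSpace ℂ (Fin d) →L[ℂ] EuclideanSpace ℂ (Fin d)) :=
      NormedAlgebra.restrictScalars ℚ ℂ _
    rw [hU, NormedSpace.star_exp, star_smul, hTs, hc,
      ← NormedSpace.exp_add_of_commute (((Commute.refl T).smul_left _).smul_right _)]
    have h0 : -c • T + c • T = 0 := by module
    rw [h0, NormedSpace.exp_zero]
  have h2 : (star U) (U x) = x := by
    have := congrArg
      (fun (L : EuclideanSpace ℂ (Fin d) →L[ℂ] EuclideanSpace ℂ (Fin d)) => L x) h1
    simpa using this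
  have h3 : (inner ℂ (U x) (U x) : ℂ) = inner ℂ x x := by
    calc (inner ℂ (U x) (U x) : ℂ)
        = inner ℂ ((ContinuousLinearMap.adjoint U) (U x)) x :=
          (ContinuousLinearMap.adjoint_inner_left _ _ _).symm
      _ = inner ℂ x x := by
          rw [← ContinuousLinearMap.star_eq_adjoint]
          exact congrArg (fun y => (inner ℂ y x : ℂ)) h2
  rw [inner_self_eq_norm_sq_to_K (𝕜 := ℂ) (U x), inner_self_eq_norm_sq_to_K (𝕜 := ℂ) x] at h3
  have h5 : ‖U x‖ ^ 2 = ‖x‖ ^ 2 := by exact_mod_cast h3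
  nlinarith [norm_nonneg (U x), norm_nonneg x]

lemma Mc_apply' (A : Matrix (Fin d) (Fin d) ℂ) (x : EuclideanSpace ℂ (Fin d)) (i : Fin d) :
    Mc A x i = ∑ j, A i j * x j := by
  change Matrix.toEuclideanLin A x i = _
  rw [Matrix.toEuclideanLin_apply]
  simp [Matrix.mulVec, dotProduct]

/-- The key mixed-block estimate. -/
lemma smul_add_norm_le (H₂ H₃ : Matrix (Fin d) (Fin d) ℂ) (a b : ℂ) :
    ‖a • Mc H₂ + b • Mc H₃‖ ≤
      Real.sqrt (‖a‖ ^ 2 + ‖b‖ ^ 2) * opNorm (Matrix.fromCols H₂ H₃) := by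
  refine ContinuousLinearMap.opNorm_le_bound _
    (mul_nonneg (Real.sqrt_nonneg _) (norm_nonneg _)) fun x => ?_
  set L := LinearMap.toContinuousLinearMap (Matrix.toEuclideanLin (Matrix.fromCols H₂ H₃))
    with hL
  set y : EuclideanSpace ℂ (Fin d ⊕ Fin d) :=
    (WithLp.equiv 2 _).symm
      (Sum.elim (fun i => a * x i) (fun i => b * x i)) with hy
  have h1 : (a • Mc H₂ + b • Mc H₃) x = L y := by
    apply (WithLp.equiv 2 (Fin d → ℂ)).injective
    simp only [hL, hy, ContinuousLinearMap.add_apply, ContinuousLinearMap.coe_smul',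
      Pi.smul_apply, LinearMap.coe_toContinuousLinearMap', Matrix.toEuclideanLin_apply]
    ext i
    simp only [WithLp.equiv_apply, WithLp.equiv_symm_apply, PiLp.toLp_apply, Matrix.mulVec, dotProduct,
      Fintype.sum_sum_type, Matrix.fromCols, Matrix.of_apply, Sum.elim_inl, Sum.elim_inr,
      PiLp.add_apply, PiLp.smul_apply, smul_eq_mul, Mc_apply', Finset.mul_sum]
    congr 1
    · exact Finset.sum_congr rfl fun j _ => by ring
    · exact Finset.sum_congr rfl fun j _ => by ring
  have h2 : ‖y‖ = Real.sqrt (‖a‖ ^ 2 + ‖b‖ ^ 2) * ‖x‖ := by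
    rw [EuclideanSpace.norm_eq, EuclideanSpace.norm_eq,
      ← Real.sqrt_mul (by positivity)]
    congr 1
    simp only [hy]
    rw [Fintype.sum_sum_type]
    simp only [WithLp.equiv_symm_apply, PiLp.toLp_apply, Sum.elim_inl, Sum.elim_inr, norm_mul]
    rw [Finset.mul_sum, ← Finset.sum_add_distrib]
    refine Finset.sum_congr rfl fun i _ => ?_
    rw [mul_pow, mul_pow]
    ring
  rw [h1]
  calc ‖L y‖ ≤ ‖L‖ * ‖y‖ := L.le_opNorm y
  _ = opNorm (Matrix.fromCols H₂ H₃) * (Real.sqrt (‖a‖^2+‖b‖^2) * ‖x‖) := by rw [h2]; rfl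
  _ = Real.sqrt (‖a‖^2+‖b‖^2) * opNorm (Matrix.fromCols H₂ H₃) * ‖x‖ := by ring

/-- One noisy factor along the path. -/
noncomputable def fac (A : Matrix (Fin d) (Fin d) ℂ) (p q : ℝ) (t : ℝ) :
    EuclideanSpace ℂ (Fin d) →L[ℂ] EuclideanSpace ℂ (Fin d) :=
  NormedSpace.exp ((-Complex.I * (1 + ((p + t * q : ℝ) : ℂ))) • Mc A)

lemma hasDerivAt_fac (A : Matrix (Fin d) (Fin d) ℂ) (p q : ℝ) (t : ℝ) :
    HasDerivAt (fun s => fac A p q s)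
      ((-Complex.I * (q : ℂ)) • (fac A p q t * Mc A)) t := by
  have h1 : HasDerivAt (fun s : ℝ => (-Complex.I * (1 + ((p + s * q : ℝ) : ℂ))))
      (-Complex.I * (q : ℂ)) t := by
    have ha : HasDerivAt (fun s : ℝ => (p + s * q : ℝ)) q t := by
      simpa using ((hasDerivAt_id t).mul_const q).const_add p
    have hb := ha.ofReal_comp
    have hc := hb.const_add (1 : ℂ)
    simpa using hc.const_mul (-Complex.I)
  have h2 := hasDerivAt_exp_smul_const (𝕂 := ℂ)
    (Mc A) ((-Complex.I * (1 + ((p + t * q : ℝ) : ℂ))))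
  exact h2.scomp t h1

lemma fac_isometry {A : Matrix (Fin d) (Fin d) ℂ} (hA : A.IsHermitian) (p q t : ℝ)
    (x : EuclideanSpace ℂ (Fin d)) : ‖fac A p q t x‖ = ‖x‖ := by
  refine exp_isometry hA ?_ x
  simp [Complex.ext_iff]

lemma fac_comm (A : Matrix (Fin d) (Fin d) ℂ) (p q t : ℝ) :
    fac A p q t * Mc A = Mc A * fac A p q t :=
  (((Commute.refl (Mc A)).smul_left _).exp_left).eq

end MixedBlockAux

open MixedBlockAux in
lemma circuitState_four {d : ℕ} (H₁ H₂ H₃ H₄ : Matrix (Fin d) (Fin d) ℂ)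
    (ψ₀ : EuclideanSpace ℂ (Fin d)) (ε : Fin 4 → ℝ) :
    circuitState ![H₁, H₂, H₃, H₄] ψ₀ ε =
      NormedSpace.exp ((-Complex.I * (1 + (ε 0 : ℂ))) • Mc H₁)
        (NormedSpace.exp ((-Complex.I * (1 + (ε 1 : ℂ))) • Mc H₂)
          (NormedSpace.exp ((-Complex.I * (1 + (ε 2 : ℂ))) • Mc H₃)
            (NormedSpace.exp ((-Complex.I * (1 + (ε 3 : ℂ))) • Mc H₄) ψ₀))) := by
  unfold circuitState
  have hl : (List.ofFn fun i : Fin 4 =>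
      NormedSpace.exp ((-Complex.I * (1 + (ε i : ℂ))) • (![H₁, H₂, H₃, H₄] i)))
      = [NormedSpace.exp ((-Complex.I * (1 + (ε 0 : ℂ))) • H₁),
         NormedSpace.exp ((-Complex.I * (1 + (ε 1 : ℂ))) • H₂),
         NormedSpace.exp ((-Complex.I * (1 + (ε 2 : ℂ))) • H₃),
         NormedSpace.exp ((-Complex.I * (1 + (ε 3 : ℂ))) • H₄)] := by
    simp [List.ofFn_succ]
  rw [hl]
  simp only [List.prod_cons, List.prod_nil, mul_one]
  show Mc _ ψ₀ = _
  rw [Mc_mul, Mc_mul, Mc_mul, Mc_exp, Mc_exp, Mc_exp, Mc_exp,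
    Mc_smul, Mc_smul, Mc_smul, Mc_smul]
  simp only [ContinuousLinearMap.mul_apply]

namespace MixedBlockAux

set_option maxHeartbeats 1000000

variable {d : ℕ}

lemma deriv_term_bound (A B C D : Matrix (Fin d) (Fin d) ℂ)
    (U₁ U₂ U₃ U₄ : EuclideanSpace ℂ (Fin d) →L[ℂ] EuclideanSpace ℂ (Fin d))
    (hU₁ : ∀ x, ‖U₁ x‖ = ‖x‖) (hU₂ : ∀ x, ‖U₂ x‖ = ‖x‖)
    (hU₃ : ∀ x, ‖U₃ x‖ = ‖x‖) (hU₄ : ∀ x, ‖U₄ x‖ = ‖x‖)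
    (hcomm : U₃ * Mc C = Mc C * U₃)
    (a b c e : ℝ) (ψ₀ : EuclideanSpace ℂ (Fin d)) (hψ₀ : ‖ψ₀‖ = 1) :
    ‖((((-Complex.I * (a:ℂ)) • (U₁ * Mc A) * U₂ +
          U₁ * ((-Complex.I * (b:ℂ)) • (U₂ * Mc B))) * U₃ +
        U₁ * U₂ * ((-Complex.I * (c:ℂ)) • (U₃ * Mc C))) * U₄ +
       U₁ * U₂ * U₃ * ((-Complex.I * (e:ℂ)) • (U₄ * Mc D))) ψ₀‖ ≤
      |a| * opNorm A + Real.sqrt (b ^ 2 + c ^ 2) * opNorm (Matrix.fromCols B C) +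
        |e| * opNorm D := by
  have hw₄ : ‖U₄ ψ₀‖ = 1 := by rw [hU₄, hψ₀]
  have hw₃ : ‖U₃ (U₄ ψ₀)‖ = 1 := by rw [hU₃, hw₄]
  have hw₂ : ‖U₂ (U₃ (U₄ ψ₀))‖ = 1 := by rw [hU₂, hw₃]
  have hnormI : ∀ r : ℝ, ‖(-Complex.I * (r:ℂ))‖ = |r| := by
    intro r
    simp
  set v₁ := (-Complex.I * (a:ℂ)) • U₁ (Mc A (U₂ (U₃ (U₄ ψ₀)))) with hv₁
  set v₂ := U₁ ((-Complex.I * (b:ℂ)) • U₂ (Mc B (U₃ (U₄ ψ₀)))) with hv₂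
  set v₃ := U₁ (U₂ ((-Complex.I * (c:ℂ)) • U₃ (Mc C (U₄ ψ₀)))) with hv₃
  set v₄ := U₁ (U₂ (U₃ ((-Complex.I * (e:ℂ)) • U₄ (Mc D ψ₀)))) with hv₄
  have hsplit : ((((-Complex.I * (a:ℂ)) • (U₁ * Mc A) * U₂ +
          U₁ * ((-Complex.I * (b:ℂ)) • (U₂ * Mc B))) * U₃ +
        U₁ * U₂ * ((-Complex.I * (c:ℂ)) • (U₃ * Mc C))) * U₄ +
       U₁ * U₂ * U₃ * ((-Complex.I * (e:ℂ)) • (U₄ * Mc D))) ψ₀ = v₁ + v₂ + v₃ + v₄ := by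
    simp only [hv₁, hv₂, hv₃, hv₄, ContinuousLinearMap.add_apply,
      ContinuousLinearMap.mul_apply, ContinuousLinearMap.smul_apply, map_smul]
  have hb1 : ‖v₁‖ ≤ |a| * opNorm A := by
    rw [hv₁, norm_smul, hnormI, hU₁]
    have := (Mc A).le_opNorm (U₂ (U₃ (U₄ ψ₀)))
    rw [hw₂, mul_one] at this
    exact mul_le_mul_of_nonneg_left this (abs_nonneg a)
  have hb4 : ‖v₄‖ ≤ |e| * opNorm D := by
    rw [hv₄, hU₁, hU₂, hU₃, norm_smul, hnormI, hU₄]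
    have := (Mc D).le_opNorm ψ₀
    rw [hψ₀, mul_one] at this
    exact mul_le_mul_of_nonneg_left this (abs_nonneg e)
  have hcomm' : U₃ (Mc C (U₄ ψ₀)) = Mc C (U₃ (U₄ ψ₀)) := by
    have := congrArg
      (fun L : EuclideanSpace ℂ (Fin d) →L[ℂ] EuclideanSpace ℂ (Fin d) => L (U₄ ψ₀)) hcomm
    simpa [ContinuousLinearMap.mul_apply] using this
  have h23 : v₂ + v₃ =
      U₁ (U₂ ((((-Complex.I * (b:ℂ)) • Mc B + (-Complex.I * (c:ℂ)) • Mc C))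
        (U₃ (U₄ ψ₀)))) := by
    rw [hv₂, hv₃, ← map_add]
    congr 1
    simp [hcomm', map_add, map_smul, ContinuousLinearMap.add_apply,
      ContinuousLinearMap.smul_apply]
  have hb23 : ‖v₂ + v₃‖ ≤
      Real.sqrt (b ^ 2 + c ^ 2) * opNorm (Matrix.fromCols B C) := by
    rw [h23, hU₁, hU₂]
    have hkey := smul_add_norm_le B C (-Complex.I * (b:ℂ)) (-Complex.I * (c:ℂ))
    rw [hnormI, hnormI, sq_abs, sq_abs] at hkey
    calc ‖((-Complex.I * (b:ℂ)) • Mc B + (-Complex.I * (c:ℂ)) • Mc C) (U₃ (U₄ ψ₀))‖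
        ≤ ‖((-Complex.I * (b:ℂ)) • Mc B + (-Complex.I * (c:ℂ)) • Mc C)‖ * 1 := by
          rw [← hw₃]
          exact ContinuousLinearMap.le_opNorm _ _
      _ = ‖((-Complex.I * (b:ℂ)) • Mc B + (-Complex.I * (c:ℂ)) • Mc C)‖ := mul_one _
      _ ≤ Real.sqrt (b ^ 2 + c ^ 2) * opNorm (Matrix.fromCols B C) := hkey
  rw [hsplit]
  have hregroup : v₁ + v₂ + v₃ + v₄ = v₁ + (v₂ + v₃) + v₄ := by abel
  rw [hregroup]
  calc ‖v₁ + (v₂ + v₃) + v₄‖ ≤ ‖v₁‖ + ‖v₂ + v₃‖ + ‖v₄‖ := norm_add₃_le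
  _ ≤ |a| * opNorm A + Real.sqrt (b ^ 2 + c ^ 2) * opNorm (Matrix.fromCols B C) +
      |e| * opNorm D := by gcongr

end MixedBlockAux

set_option maxHeartbeats 2000000 in
open MixedBlockAux in
/-- mixed-block variant of Theorem 3 of the paper, N = 4:
`‖H₁‖₂ + √2·‖[H₂ H₃]‖₂ + ‖H₄‖₂` is a Lipschitz bound of `ψ` w.r.t. the ∞-norm,
where `[H₂ H₃]` is the horizontal concatenation `Matrix.fromCols H₂ H₃`. -/
theorem mixed_block_lipschitz_bound_four {d : ℕ}
    (H₁ H₂ H₃ H₄ : Matrix (Fin d) (Fin d) ℂ)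
    (h₁ : H₁.IsHermitian) (h₂ : H₂.IsHermitian) (h₃ : H₃.IsHermitian) (h₄ : H₄.IsHermitian)
    (ψ₀ : EuclideanSpace ℂ (Fin d)) (hψ₀ : ‖ψ₀‖ = 1) (ε ε' : Fin 4 → ℝ) :
    ‖circuitState ![H₁, H₂, H₃, H₄] ψ₀ ε - circuitState ![H₁, H₂, H₃, H₄] ψ₀ ε'‖ ≤
      (opNorm H₁ + Real.sqrt 2 * opNorm (Matrix.fromCols H₂ H₃) + opNorm H₄) * ‖ε - ε'‖ := by
  have hδle : ∀ j : Fin 4, |ε j - ε' j| ≤ ‖ε - ε'‖ := by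
    intro j
    simpa [Real.norm_eq_abs] using norm_le_pi_norm (ε - ε') j
  have hnn : (0:ℝ) ≤ ‖ε - ε'‖ := norm_nonneg _
  have hop1 : 0 ≤ opNorm H₁ := norm_nonneg _
  have hop23 : 0 ≤ opNorm (Matrix.fromCols H₂ H₃) := norm_nonneg _
  have hop4 : 0 ≤ opNorm H₄ := norm_nonneg _
  set F : ℝ → EuclideanSpace ℂ (Fin d) := fun t =>
    (fac H₁ (ε' 0) (ε 0 - ε' 0) t * fac H₂ (ε' 1) (ε 1 - ε' 1) t *
      fac H₃ (ε' 2) (ε 2 - ε' 2) t * fac H₄ (ε' 3) (ε 3 - ε' 3) t) ψ₀ with hF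
  set Φ : ℝ → EuclideanSpace ℂ (Fin d) := fun t =>
    ((((-Complex.I * (((ε 0 - ε' 0):ℝ):ℂ)) • ((fac H₁ (ε' 0) (ε 0 - ε' 0) t) * Mc H₁) * (fac H₂ (ε' 1) (ε 1 - ε' 1) t) +
          (fac H₁ (ε' 0) (ε 0 - ε' 0) t) * ((-Complex.I * (((ε 1 - ε' 1):ℝ):ℂ)) • ((fac H₂ (ε' 1) (ε 1 - ε' 1) t) * Mc H₂))) * (fac H₃ (ε' 2) (ε 2 - ε' 2) t) +
        (fac H₁ (ε' 0) (ε 0 - ε' 0) t) * (fac H₂ (ε' 1) (ε 1 - ε' 1) t) * ((-Complex.I * (((ε 2 - ε' 2):ℝ):ℂ)) • ((fac H₃ (ε' 2) (ε 2 - ε' 2) t) * Mc H₃))) * (fac H₄ (ε' 3) (ε 3 - ε' 3) t) +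
       (fac H₁ (ε' 0) (ε 0 - ε' 0) t) * (fac H₂ (ε' 1) (ε 1 - ε' 1) t) * (fac H₃ (ε' 2) (ε 2 - ε' 2) t) * ((-Complex.I * (((ε 3 - ε' 3):ℝ):ℂ)) • ((fac H₄ (ε' 3) (ε 3 - ε' 3) t) * Mc H₄))) ψ₀
    with hΦ
  have hderiv : ∀ t : ℝ, HasDerivAt F (Φ t) t := by
    intro t
    have hd1 := hasDerivAt_fac H₁ (ε' 0) (ε 0 - ε' 0) t
    have hd2 := hasDerivAt_fac H₂ (ε' 1) (ε 1 - ε' 1) t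
    have hd3 := hasDerivAt_fac H₃ (ε' 2) (ε 2 - ε' 2) t
    have hd4 := hasDerivAt_fac H₄ (ε' 3) (ε 3 - ε' 3) t
    have hP := ((hd1.mul hd2).mul hd3).mul hd4
    have hcomp := ((ContinuousLinearMap.apply ℂ
      (EuclideanSpace ℂ (Fin d)) ψ₀).restrictScalars ℝ).hasFDerivAt.comp_hasDerivAt t hP
    simp only [hF, hΦ]
    simpa [Function.comp_def, Pi.mul_def] using hcomp
  have hbound : ∀ t ∈ Set.Ico (0:ℝ) 1, ‖Φ t‖ ≤
      (opNorm H₁ + Real.sqrt 2 * opNorm (Matrix.fromCols H₂ H₃) + opNorm H₄) *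
        ‖ε - ε'‖ := by
    intro t _
    simp only [hΦ]
    have hmain := deriv_term_bound H₁ H₂ H₃ H₄
      (fac H₁ (ε' 0) (ε 0 - ε' 0) t) (fac H₂ (ε' 1) (ε 1 - ε' 1) t)
      (fac H₃ (ε' 2) (ε 2 - ε' 2) t) (fac H₄ (ε' 3) (ε 3 - ε' 3) t)
      (fac_isometry h₁ _ _ t) (fac_isometry h₂ _ _ t)
      (fac_isometry h₃ _ _ t) (fac_isometry h₄ _ _ t)
      (fac_comm H₃ (ε' 2) (ε 2 - ε' 2) t)
      (ε 0 - ε' 0) (ε 1 - ε' 1) (ε 2 - ε' 2) (ε 3 - ε' 3) ψ₀ hψ₀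
    refine hmain.trans ?_
    have hsqrt : Real.sqrt ((ε 1 - ε' 1) ^ 2 + (ε 2 - ε' 2) ^ 2) ≤
        Real.sqrt 2 * ‖ε - ε'‖ := by
      have e1 : (ε 1 - ε' 1) ^ 2 ≤ ‖ε - ε'‖ ^ 2 := by
        have := hδle 1
        nlinarith [abs_nonneg (ε 1 - ε' 1), sq_abs (ε 1 - ε' 1)]
      have e2 : (ε 2 - ε' 2) ^ 2 ≤ ‖ε - ε'‖ ^ 2 := by
        have := hδle 2
        nlinarith [abs_nonneg (ε 2 - ε' 2), sq_abs (ε 2 - ε' 2)]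
      calc Real.sqrt ((ε 1 - ε' 1) ^ 2 + (ε 2 - ε' 2) ^ 2)
          ≤ Real.sqrt (2 * ‖ε - ε'‖ ^ 2) := Real.sqrt_le_sqrt (by linarith)
        _ = Real.sqrt 2 * ‖ε - ε'‖ := by
            rw [Real.sqrt_mul (by norm_num), Real.sqrt_sq hnn]
    have t1 : |ε 0 - ε' 0| * opNorm H₁ ≤ ‖ε - ε'‖ * opNorm H₁ :=
      mul_le_mul_of_nonneg_right (hδle 0) hop1
    have t2 : Real.sqrt ((ε 1 - ε' 1) ^ 2 + (ε 2 - ε' 2) ^ 2) *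
        opNorm (Matrix.fromCols H₂ H₃) ≤
        Real.sqrt 2 * ‖ε - ε'‖ * opNorm (Matrix.fromCols H₂ H₃) :=
      mul_le_mul_of_nonneg_right hsqrt hop23
    have t3 : |ε 3 - ε' 3| * opNorm H₄ ≤ ‖ε - ε'‖ * opNorm H₄ :=
      mul_le_mul_of_nonneg_right (hδle 3) hop4
    nlinarith [t1, t2, t3]
  have hmv := norm_image_sub_le_of_norm_deriv_le_segment_01'
    (f := F) (f' := Φ) (fun x _ => (hderiv x).hasDerivWithinAt) hbound
  have hk1 : ∀ j : Fin 4, ε' j + 1 * (ε j - ε' j) = ε j := fun j => by ring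
  have hk0 : ∀ j : Fin 4, ε' j + 0 * (ε j - ε' j) = ε' j := fun j => by ring
  have hF1 : F 1 = circuitState ![H₁, H₂, H₃, H₄] ψ₀ ε := by
    rw [circuitState_four]
    simp only [hF, fac, ContinuousLinearMap.mul_apply, hk1]
  have hF0 : F 0 = circuitState ![H₁, H₂, H₃, H₄] ψ₀ ε' := by
    rw [circuitState_four]
    simp only [hF, fac, ContinuousLinearMap.mul_apply, hk0]
  rw [← hF1, ← hF0]
  exact hmv
end

section
/- Let H be a d×d complex Hermitian matrix, let ε̄ ≥ 0 satisfy ‖H‖₂·ε̄ ≤ π/2, and let ψ₀ ∈ ℂ^d be a unit vector. Then for every ε ∈ ℝ with |ε| ≤ ε̄: |⟨exp(−i(1+ε)H)·ψ₀, exp(−iH)·ψ₀⟩| ≥ cos(‖H‖₂·ε̄). -/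
set_option autoImplicit false

open scoped Matrix

open NormedSpace in
lemma exp_mulVec_eigen {d : ℕ} (A : Matrix (Fin d) (Fin d) ℂ) (v : Fin d → ℂ) (c : ℂ)
    (hv : A *ᵥ v = c • v) : exp A *ᵥ v = Complex.exp c • v := by
  letI : SeminormedRing (Matrix (Fin d) (Fin d) ℂ) := Matrix.linftyOpSemiNormedRing
  letI : NormedRing (Matrix (Fin d) (Fin d) ℂ) := Matrix.linftyOpNormedRing
  letI : NormedAlgebra ℂ (Matrix (Fin d) (Fin d) ℂ) := Matrix.linftyOpNormedAlgebra
  have hpow : ∀ n : ℕ, A ^ n *ᵥ v = c ^ n • v := by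
    intro n
    induction n with
    | zero => simp [Matrix.one_mulVec]
    | succ n ih =>
      rw [pow_succ, ← Matrix.mulVec_mulVec, hv, Matrix.mulVec_smul, ih, smul_smul, pow_succ,
        mul_comm]
  let L : Matrix (Fin d) (Fin d) ℂ →ₗ[ℂ] (Fin d → ℂ) :=
    { toFun := fun B => B *ᵥ v
      map_add' := fun B C => Matrix.add_mulVec B C v
      map_smul' := fun r B => Matrix.smul_mulVec r B v }
  let Lc : Matrix (Fin d) (Fin d) ℂ →L[ℂ] (Fin d → ℂ) := LinearMap.toContinuousLinearMap L
  have hsum : Summable fun n : ℕ => ((Nat.factorial n : ℂ))⁻¹ • A ^ n := NormedSpace.expSeries_summable' A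
  have h1 : exp A *ᵥ v = Lc (exp A) := rfl
  rw [h1, NormedSpace.exp_eq_tsum ℂ, Lc.map_tsum hsum]
  have h2 : ∀ n : ℕ, Lc (((Nat.factorial n : ℂ))⁻¹ • A ^ n) = (((Nat.factorial n : ℂ))⁻¹ * c ^ n) • v := by
    intro n
    show (((Nat.factorial n : ℂ))⁻¹ • A ^ n) *ᵥ v = _
    rw [Matrix.smul_mulVec, hpow, smul_smul]
  simp_rw [h2]
  rw [Summable.tsum_smul_const]
  · congr 1
    rw [Complex.exp_eq_exp_ℂ, NormedSpace.exp_eq_tsum ℂ]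
    simp [smul_eq_mul]
  · have := NormedSpace.expSeries_summable' (𝕂 := ℂ) c
    simpa [smul_eq_mul] using this


lemma toEuclideanLin_mul {d : ℕ} (M N : Matrix (Fin d) (Fin d) ℂ) (x : EuclideanSpace ℂ (Fin d)) :
    Matrix.toEuclideanLin (M * N) x = Matrix.toEuclideanLin M (Matrix.toEuclideanLin N x) := by
  simp [Matrix.toEuclideanLin_apply, Matrix.mulVec_mulVec]

set_option maxHeartbeats 1000000 in
set_option synthInstance.maxHeartbeats 400000 in
/-- single-gate cosine fidelity bound, Appendix C of the paper: for a Hermitian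
matrix `H`, `ε̄ ≥ 0` with `‖H‖₂·ε̄ ≤ π/2`, a unit vector `ψ₀` and any `ε` with `|ε| ≤ ε̄`, the
fidelity `|⟨exp(−i(1+ε)H)ψ₀, exp(−iH)ψ₀⟩|` is at least `cos(‖H‖₂·ε̄)`. -/
theorem single_gate_cos_fidelity_bound {d : ℕ} (H : Matrix (Fin d) (Fin d) ℂ)
    (hH : H.IsHermitian) (εbar : ℝ) (hεbar : 0 ≤ εbar) (hsmall : opNorm H * εbar ≤ Real.pi / 2)
    (ψ₀ : EuclideanSpace ℂ (Fin d)) (hψ₀ : ‖ψ₀‖ = 1) (ε : ℝ) (hε : |ε| ≤ εbar) :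
    Real.cos (opNorm H * εbar) ≤
      ‖(inner ℂ
        (Matrix.toEuclideanLin (NormedSpace.exp ((-Complex.I * (1 + (ε : ℂ))) • H)) ψ₀)
        (Matrix.toEuclideanLin (NormedSpace.exp ((-Complex.I) • H)) ψ₀) : ℂ)‖ := by
  have hconj : (NormedSpace.exp ((-Complex.I * (1 + (ε : ℂ))) • H))ᴴ
      = NormedSpace.exp ((Complex.I * (1 + (ε : ℂ))) • H) := by
    rw [← Matrix.exp_conjTranspose, Matrix.conjTranspose_smul, hH.eq]
    congr 1
    simp [Complex.ext_iff]
  have hmul : NormedSpace.exp ((Complex.I * (1 + (ε : ℂ))) • H)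
        * NormedSpace.exp ((-Complex.I) • H)
      = NormedSpace.exp ((Complex.I * (ε : ℂ)) • H) := by
    rw [← Matrix.exp_add_of_commute _ _ (((Commute.refl H).smul_left _).smul_right _)]
    congr 1
    rw [← add_smul]
    congr 1
    ring
  have hred : (inner ℂ
        (Matrix.toEuclideanLin (NormedSpace.exp ((-Complex.I * (1 + (ε : ℂ))) • H)) ψ₀)
        (Matrix.toEuclideanLin (NormedSpace.exp ((-Complex.I) • H)) ψ₀) : ℂ)
      = inner ℂ ψ₀ (Matrix.toEuclideanLin (NormedSpace.exp ((Complex.I * (ε : ℂ)) • H)) ψ₀) := by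
    have h1 : Matrix.toEuclideanLin (NormedSpace.exp ((-Complex.I * (1 + (ε : ℂ))) • H))
        = LinearMap.adjoint (Matrix.toEuclideanLin
            (NormedSpace.exp ((Complex.I * (1 + (ε : ℂ))) • H))) := by
      rw [← Matrix.toEuclideanLin_conjTranspose_eq_adjoint, ← hconj,
        Matrix.conjTranspose_conjTranspose]
    rw [h1, LinearMap.adjoint_inner_left, ← toEuclideanLin_mul, hmul]
  rw [hred]
  set a : ℝ := opNorm H with ha
  set b := hH.eigenvectorBasis with hb
  set μ := hH.eigenvalues with hμ
  set c : Fin d → ℂ := fun j => b.repr ψ₀ j with hc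
  have hbnorm : ∀ j, ‖b j‖ = 1 := fun j => b.orthonormal.1 j
  have hμbound : ∀ j, |μ j| ≤ a := by
    intro j
    have h2 : H *ᵥ ⇑(b j) = (μ j : ℂ) • ⇑(b j) := by
      rw [hH.mulVec_eigenvectorBasis j]
      funext k
      simp [Complex.real_smul]
      rfl
    have h1 : (LinearMap.toContinuousLinearMap (Matrix.toEuclideanLin H)) (b j)
        = (μ j : ℂ) • (b j) := WithLp.ofLp_injective (p := 2) h2
    have h3 := (LinearMap.toContinuousLinearMap (Matrix.toEuclideanLin H)).le_opNorm (b j)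
    rw [h1, norm_smul, hbnorm j] at h3
    simpa [ha, opNorm, Complex.norm_real] using h3
  have hanonneg : 0 ≤ a := by
    rw [ha, opNorm]; exact norm_nonneg _
  set B := Matrix.toEuclideanLin (NormedSpace.exp ((Complex.I * (ε : ℂ)) • H)) with hB
  have hBv : ∀ j, B (b j) = Complex.exp (Complex.I * ε * μ j) • b j := by
    intro j
    have heig : ((Complex.I * (ε : ℂ)) • H) *ᵥ ⇑(b j)
        = (Complex.I * ε * μ j) • ⇑(b j) := by
      rw [Matrix.smul_mulVec, hH.mulVec_eigenvectorBasis j]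
      funext k
      simp [Complex.real_smul]
      ring
    exact WithLp.ofLp_injective (p := 2) (exp_mulVec_eigen _ _ _ heig)
  have hBψ : B ψ₀ = ∑ j, (c j * Complex.exp (Complex.I * ε * μ j)) • b j := by
    conv_lhs => rw [← b.sum_repr ψ₀]
    rw [map_sum]
    congr 1
    funext j
    rw [map_smul, hBv j, smul_smul]
  have hexpand : (inner ℂ ψ₀ (B ψ₀) : ℂ)
      = ∑ j, Complex.exp (Complex.I * ε * μ j) * (Complex.normSq (c j) : ℂ) := by
    rw [hBψ, inner_sum]
    congr 1
    funext j
    rw [inner_smul_right]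
    have hinn : (inner ℂ ψ₀ (b j) : ℂ) = (starRingEnd ℂ) (c j) := by
      rw [hc]
      simp only [b.repr_apply_apply]
      exact (inner_conj_symm ψ₀ (b j)).symm
    rw [hinn]
    have := Complex.mul_conj (c j)
    rw [← this]
    ring
  have hsum1 : ∑ j, Complex.normSq (c j) = 1 := by
    have h4 : ‖b.repr ψ₀‖ = 1 := by rw [LinearIsometryEquiv.norm_map]; exact hψ₀
    have h5 := EuclideanSpace.norm_eq (b.repr ψ₀)
    rw [h4] at h5
    have h6 : ∑ j, ‖b.repr ψ₀ j‖ ^ 2 = 1 := Real.sqrt_eq_one.mp h5.symm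
    rw [← h6]
    congr 1
    funext j
    rw [Complex.normSq_eq_norm_sq, hc]
  have hcos : ∀ j, Real.cos (a * εbar) ≤ Real.cos (ε * μ j) := by
    intro j
    rw [← Real.cos_abs (ε * μ j)]
    apply Real.cos_le_cos_of_nonneg_of_le_pi (abs_nonneg _)
    · linarith [Real.pi_pos]
    · rw [abs_mul]
      calc |ε| * |μ j| ≤ εbar * a :=
            mul_le_mul hε (hμbound j) (abs_nonneg _) hεbar
        _ = a * εbar := mul_comm _ _
  have hre : Real.cos (a * εbar) ≤ (inner ℂ ψ₀ (B ψ₀) : ℂ).re := by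
    rw [hexpand, Complex.re_sum]
    have hterm : ∀ j, Complex.normSq (c j) * Real.cos (a * εbar)
        ≤ (Complex.exp (Complex.I * ε * μ j) * (Complex.normSq (c j) : ℂ)).re := by
      intro j
      have h7 : (Complex.exp (Complex.I * ε * μ j) * (Complex.normSq (c j) : ℂ)).re
          = (Complex.exp (Complex.I * ε * μ j)).re * Complex.normSq (c j) := by
        simp [Complex.mul_re]
      have h8 : Complex.I * ε * μ j = ((ε * μ j : ℝ) : ℂ) * Complex.I := by
        push_cast
        ring
      rw [h7, h8, Complex.exp_ofReal_mul_I_re, mul_comm (Real.cos (ε * μ j))]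
      exact mul_le_mul_of_nonneg_left (hcos j) (Complex.normSq_nonneg _)
    calc Real.cos (a * εbar) = ∑ j, Complex.normSq (c j) * Real.cos (a * εbar) := by
          rw [← Finset.sum_mul, hsum1, one_mul]
      _ ≤ _ := Finset.sum_le_sum fun j _ => hterm j
  calc Real.cos (a * εbar) ≤ (inner ℂ ψ₀ (B ψ₀) : ℂ).re := hre
    _ ≤ ‖(inner ℂ ψ₀ (B ψ₀) : ℂ)‖ := Complex.re_le_norm _
end

section
/- Let H₁, …, H_N be d×d complex Hermitian matrices, let ψ₀ ∈ ℂ^d be a unit vector, and for ε ∈ ℝ^N define ψ(ε) = exp(−i(1+ε₁)H₁)···exp(−i(1+ε_N)H_N)·ψ₀, with ideal state ψ̂ = ψ(0). Let ε̄ ≥ 0 satisfy ‖H_i‖₂·ε̄ ≤ π/2 for all i and Σ_{i=1}^N sin(‖H_i‖₂·ε̄) ≤ 1. Then for every ε ∈ ℝ^N with ‖ε‖_∞ ≤ ε̄: |⟨ψ(ε), ψ̂⟩| ≥ √(1 − (Σ_{i=1}^N sin(‖H_i‖₂·ε̄))²). -/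
set_option autoImplicit false

open scoped Matrix

open Real

-- step 1: real triangle lemma
lemma tri_real {x y z : ℝ} (hx0 : 0 ≤ x) (hx1 : x ≤ 1) (hy0 : 0 ≤ y) (hy1 : y ≤ 1)
    (hz0 : 0 ≤ z) (hz : x * y - Real.sqrt (1 - x^2) * Real.sqrt (1 - y^2) ≤ z) :
    Real.sqrt (1 - z^2) ≤ Real.sqrt (1 - x^2) + Real.sqrt (1 - y^2) := by
  set s := Real.sqrt (1 - x^2) with hs
  set t := Real.sqrt (1 - y^2) with ht
  have hs0 : 0 ≤ s := Real.sqrt_nonneg _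
  have ht0 : 0 ≤ t := Real.sqrt_nonneg _
  have hs2 : s^2 = 1 - x^2 := Real.sq_sqrt (by nlinarith)
  have ht2 : t^2 = 1 - y^2 := Real.sq_sqrt (by nlinarith)
  rcases le_or_gt (x*y) (s*t) with h | h
  · -- then s^2 + t^2 ≥ 1, so s + t ≥ 1 ≥ sqrt(1 - z^2)
    have h1 : 1 ≤ (s+t)^2 := by nlinarith
    calc Real.sqrt (1 - z^2) ≤ Real.sqrt 1 := Real.sqrt_le_sqrt (by nlinarith)
    _ = 1 := Real.sqrt_one
    _ ≤ s + t := by nlinarith [Real.sqrt_nonneg (1 - z^2)]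
  · have hnn : 0 ≤ x*y - s*t := le_of_lt (sub_pos.mpr h)
    have hz2 : (x*y - s*t)^2 ≤ z^2 := pow_le_pow_left₀ hnn hz 2
    have hxy : x*y ≤ 1 := by nlinarith
    have hprod : x^2*y^2 = (1-s^2)*(1-t^2) := by rw [show (1:ℝ)-s^2 = x^2 by linarith, show (1:ℝ)-t^2 = y^2 by linarith]
    have hkey : 1 - z^2 ≤ (s+t)^2 := by
      nlinarith [hz2, mul_nonneg hs0 ht0, sq_nonneg (s*t), mul_nonneg (mul_nonneg hs0 ht0) (sub_nonneg.mpr hxy)]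
    calc Real.sqrt (1 - z^2) ≤ Real.sqrt ((s+t)^2) := Real.sqrt_le_sqrt hkey
    _ = s + t := Real.sqrt_sq (by positivity)

section IPS
variable {E : Type*} [NormedAddCommGroup E] [InnerProductSpace ℂ E]
local notation "⟪" x ", " y "⟫" => @inner ℂ _ _ x y

lemma expand_inner {b : E} (hb : ‖b‖ = 1) (u v : E) :
    ⟪u - ⟪b,u⟫ • b, v - ⟪b,v⟫ • b⟫ = ⟪u,v⟫ - ⟪u,b⟫ * ⟪b,v⟫ := by
  have hbb : ⟪b,b⟫ = 1 := by
    rw [inner_self_eq_norm_sq_to_K, hb]; norm_num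
  simp only [inner_sub_left, inner_sub_right, inner_smul_left, inner_smul_right, hbb, mul_one,
    inner_conj_symm]
  ring

lemma norm_perp {b : E} (hb : ‖b‖ = 1) (u : E) (hu : ‖u‖ = 1) :
    ‖u - ⟪b,u⟫ • b‖ = Real.sqrt (1 - ‖⟪u,b⟫‖ ^ 2) := by
  have h1 : ⟪u - ⟪b,u⟫ • b, u - ⟪b,u⟫ • b⟫ = 1 - ⟪u,b⟫ * ⟪b,u⟫ := by
    rw [expand_inner hb u u, inner_self_eq_norm_sq_to_K, hu]; norm_num
  have h2 : ⟪u,b⟫ * ⟪b,u⟫ = ((‖⟪u,b⟫‖ ^ 2 : ℝ) : ℂ) := by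
    rw [← inner_conj_symm b u, Complex.mul_conj]
    simp [Complex.sq_norm]
  have h3 : (‖u - ⟪b,u⟫ • b‖ ^ 2 : ℝ) = 1 - ‖⟪u,b⟫‖ ^ 2 := by
    have := inner_self_eq_norm_sq_to_K (𝕜 := ℂ) (x := u - ⟪b,u⟫ • b)
    rw [h1, h2] at this
    exact_mod_cast congrArg Complex.re this.symm
  rw [← h3, Real.sqrt_sq (norm_nonneg _)]

lemma inner_lower (a b c : E) (ha : ‖a‖ = 1) (hb : ‖b‖ = 1) (hc : ‖c‖ = 1) :
    ‖⟪a,b⟫‖ * ‖⟪b,c⟫‖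
      - Real.sqrt (1 - ‖⟪a,b⟫‖ ^ 2) * Real.sqrt (1 - ‖⟪b,c⟫‖ ^ 2)
      ≤ ‖⟪a,c⟫‖ := by
  set a' := a - ⟪b,a⟫ • b
  set c' := c - ⟪b,c⟫ • b
  have hkey : ⟪a',c'⟫ = ⟪a,c⟫ - ⟪a,b⟫ * ⟪b,c⟫ := expand_inner hb a c
  have h1 : ‖⟪a,b⟫ * ⟪b,c⟫‖ - ‖⟪a',c'⟫‖ ≤ ‖⟪a,c⟫‖ := by
    have h2 : ⟪a,b⟫ * ⟪b,c⟫ = ⟪a,c⟫ - ⟪a',c'⟫ := by rw [hkey]; ring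
    have h4 := norm_sub_le ⟪a,c⟫ ⟪a',c'⟫
    rw [h2]
    linarith
  have h3 : ‖⟪a',c'⟫‖ ≤ Real.sqrt (1 - ‖⟪a,b⟫‖ ^ 2) *
      Real.sqrt (1 - ‖⟪b,c⟫‖ ^ 2) := by
    calc ‖⟪a',c'⟫‖ = ‖⟪a',c'⟫‖ := rfl
    _ ≤ ‖a'‖ * ‖c'‖ := norm_inner_le_norm a' c'
    _ = Real.sqrt (1 - ‖⟪a,b⟫‖ ^ 2) * Real.sqrt (1 - ‖⟪b,c⟫‖ ^ 2) := by
        have habs_symm : ‖⟪c,b⟫‖ = ‖⟪b,c⟫‖ := by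
          rw [← inner_conj_symm c b, Complex.norm_conj]
        rw [norm_perp hb a ha, norm_perp hb c hc, habs_symm]
  rw [norm_mul] at h1
  linarith

lemma D_tri (a b c : E) (ha : ‖a‖ = 1) (hb : ‖b‖ = 1) (hc : ‖c‖ = 1) :
    Real.sqrt (1 - ‖⟪a,c⟫‖ ^ 2) ≤
      Real.sqrt (1 - ‖⟪a,b⟫‖ ^ 2) + Real.sqrt (1 - ‖⟪b,c⟫‖ ^ 2) := by
  have habs : ∀ u v : E, ‖u‖ = 1 → ‖v‖ = 1 → ‖⟪u,v⟫‖ ≤ 1 := by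
    intro u v hu hv
    have := norm_inner_le_norm (𝕜 := ℂ) u v
    rwa [hu, hv, mul_one] at this
  exact tri_real (norm_nonneg _) (habs a b ha hb) (norm_nonneg _)
    (habs b c hb hc) (norm_nonneg _) (inner_lower a b c ha hb hc)

end IPS

section Mat
variable {d : ℕ}
local notation "E" => EuclideanSpace ℂ (Fin d)
local notation "L" A => Matrix.toEuclideanLin (A : Matrix (Fin d) (Fin d) ℂ)
local notation "⟪" x ", " y "⟫" => @inner ℂ _ _ x y
open NormedSpace

lemma Lmul (A B : Matrix (Fin d) (Fin d) ℂ) (x : E) :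
    Matrix.toEuclideanLin (A * B) x = Matrix.toEuclideanLin A (Matrix.toEuclideanLin B x) := by
  simp [Matrix.toEuclideanLin_apply, Matrix.mulVec_mulVec]

lemma L_one (x : E) : Matrix.toEuclideanLin (1 : Matrix (Fin d) (Fin d) ℂ) x = x := by
  simp [Matrix.toEuclideanLin_apply]

lemma inner_L_left (A : Matrix (Fin d) (Fin d) ℂ) (x y : E) :
    ⟪Matrix.toEuclideanLin A x, y⟫ = ⟪x, Matrix.toEuclideanLin Aᴴ y⟫ := by
  rw [Matrix.toEuclideanLin_conjTranspose_eq_adjoint, LinearMap.adjoint_inner_right]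

lemma inner_L_unitary {A : Matrix (Fin d) (Fin d) ℂ} (h : Aᴴ * A = 1) (x y : E) :
    ⟪Matrix.toEuclideanLin A x, Matrix.toEuclideanLin A y⟫ = ⟪x, y⟫ := by
  rw [inner_L_left, ← Lmul, h, L_one]

lemma norm_L_unitary {A : Matrix (Fin d) (Fin d) ℂ} (h : Aᴴ * A = 1) (x : E) :
    ‖Matrix.toEuclideanLin A x‖ = ‖x‖ := by
  have h1 := inner_L_unitary h x x
  rw [inner_self_eq_norm_sq_to_K (𝕜 := ℂ), inner_self_eq_norm_sq_to_K (𝕜 := ℂ)] at h1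
  have h2 : (‖Matrix.toEuclideanLin A x‖ ^ 2 : ℝ) = ‖x‖ ^ 2 := by exact_mod_cast h1
  nlinarith [norm_nonneg (Matrix.toEuclideanLin A x), norm_nonneg x]

lemma exp_ct {H : Matrix (Fin d) (Fin d) ℂ} (hH : H.IsHermitian) (z : ℂ) :
    (NormedSpace.exp (z • H))ᴴ = NormedSpace.exp ((starRingEnd ℂ z) • H) := by
  rw [← Matrix.exp_conjTranspose, Matrix.conjTranspose_smul, hH.eq]
  rfl

lemma exp_smul_mul (H : Matrix (Fin d) (Fin d) ℂ) (a b : ℂ) :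
    NormedSpace.exp (a • H) * NormedSpace.exp (b • H) = NormedSpace.exp ((a + b) • H) := by
  rw [← Matrix.exp_add_of_commute _ _ (((Commute.refl H).smul_left a).smul_right b), add_smul]

lemma gate_unitary {H : Matrix (Fin d) (Fin d) ℂ} (hH : H.IsHermitian) (z : ℂ)
    (hz : starRingEnd ℂ z = -z) : (NormedSpace.exp (z • H))ᴴ * NormedSpace.exp (z • H) = 1 := by
  rw [exp_ct hH, hz, exp_smul_mul]
  simp

lemma eig_abs_le (A : Matrix (Fin d) (Fin d) ℂ) (hA : A.IsHermitian) (j : Fin d) :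
    |hA.eigenvalues j| ≤ opNorm A := by
  set v : E := hA.eigenvectorBasis j with hv
  have hv1 : ‖v‖ = 1 := hA.eigenvectorBasis.orthonormal.1 j
  have hAv : Matrix.toEuclideanLin A v = (hA.eigenvalues j : ℝ) • v := by
    rw [Matrix.toEuclideanLin_apply]
    have h := hA.mulVec_eigenvectorBasis j
    apply (WithLp.equiv 2 ((Fin d) → ℂ)).injective
    simpa using h
  have h1 : ‖Matrix.toEuclideanLin A v‖ = |hA.eigenvalues j| := by
    rw [hAv, norm_smul, hv1, Real.norm_eq_abs, mul_one]
  have h2 := (LinearMap.toContinuousLinearMap (Matrix.toEuclideanLin A)).le_opNorm v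
  simp only [LinearMap.coe_toContinuousLinearMap'] at h2
  rw [h1, hv1, mul_one] at h2
  exact h2

lemma inner_L_right (A : Matrix (Fin d) (Fin d) ℂ) (x y : E) :
    ⟪x, Matrix.toEuclideanLin A y⟫ = ⟪Matrix.toEuclideanLin Aᴴ x, y⟫ := by
  rw [inner_L_left, Matrix.conjTranspose_conjTranspose]

set_option maxHeartbeats 1000000 in
lemma cos_le_abs_inner_exp (A : Matrix (Fin d) (Fin d) ℂ) (hA : A.IsHermitian)
    (φ : E) (hφ : ‖φ‖ = 1) (θ : ℝ) (hθA : opNorm A ≤ θ) (hθ2 : θ ≤ Real.pi / 2) :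
    Real.cos θ ≤ ‖⟪φ, Matrix.toEuclideanLin (NormedSpace.exp (Complex.I • A)) φ⟫‖ := by
  set U : Matrix (Fin d) (Fin d) ℂ := (hA.eigenvectorUnitary : Matrix (Fin d) (Fin d) ℂ) with hUdef
  set lam : Fin d → ℝ := hA.eigenvalues with hlam
  have h2 : U * star U = 1 := Matrix.mem_unitaryGroup_iff.mp hA.eigenvectorUnitary.2
  have h1 : star U * U = 1 := Matrix.mem_unitaryGroup_iff'.mp hA.eigenvectorUnitary.2
  have hUinv : U⁻¹ = star U := Matrix.inv_eq_right_inv h2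
  have hUisUnit : IsUnit U := ⟨⟨U, star U, h2, h1⟩, rfl⟩
  set w : Fin d → ℂ := fun j => Complex.exp (Complex.I * (lam j : ℂ)) with hw
  have hIA : Complex.I • A = U * Matrix.diagonal (fun j => Complex.I * (lam j : ℂ)) * U⁻¹ := by
    rw [hUinv]
    conv_lhs => rw [hA.spectral_theorem, Unitary.conjStarAlgAut_apply]
    rw [← hUdef, ← smul_mul_assoc, ← mul_smul_comm, ← Matrix.diagonal_smul]
    congr 2
  have hexp : NormedSpace.exp (Complex.I • A) = U * Matrix.diagonal w * U⁻¹ := by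
    rw [hIA, Matrix.exp_conj U _ hUisUnit, Matrix.exp_diagonal]
    congr 2
    rw [Pi.exp_def]
    funext j
    rw [← Complex.exp_eq_exp_ℂ]
  set ξ : E := Matrix.toEuclideanLin (star U) φ with hxi
  have hstarU_unit : (star U)ᴴ * star U = 1 := by
    rw [← Matrix.star_eq_conjTranspose, star_star]; exact h2
  have hξ1 : ‖ξ‖ = 1 := by rw [hxi, norm_L_unitary hstarU_unit, hφ]
  have hinner : ⟪φ, Matrix.toEuclideanLin (NormedSpace.exp (Complex.I • A)) φ⟫
      = ⟪ξ, Matrix.toEuclideanLin (Matrix.diagonal w) ξ⟫ := by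
    rw [hexp, hUinv, Lmul, Lmul, inner_L_right, ← Matrix.star_eq_conjTranspose]
  have hcoord : ∀ j, Matrix.toEuclideanLin (Matrix.diagonal w) ξ j = w j * ξ j := by
    intro j
    rw [Matrix.toEuclideanLin_apply]
    simp [Matrix.mulVec_diagonal]
  have hre : (⟪ξ, Matrix.toEuclideanLin (Matrix.diagonal w) ξ⟫ : ℂ).re
      = ∑ j, Real.cos (lam j) * Complex.normSq (ξ j) := by
    rw [PiLp.inner_apply]
    rw [Complex.re_sum]
    congr 1
    funext j
    rw [hcoord j]
    have : (starRingEnd ℂ) (ξ j) * (w j * ξ j) = w j * ((Complex.normSq (ξ j) : ℝ) : ℂ) := by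
      rw [Complex.normSq_eq_conj_mul_self]; ring
    rw [RCLike.inner_apply', this]
    have hwre : (w j).re = Real.cos (lam j) := by
      show (Complex.exp (Complex.I * (lam j : ℂ))).re = _
      rw [mul_comm, Complex.exp_ofReal_mul_I_re]
    simp [Complex.mul_re, hwre]
  have hsum : ∑ j, Complex.normSq (ξ j) = 1 := by
    have := hξ1
    rw [EuclideanSpace.norm_eq] at this
    have h3 : ∑ j, ‖ξ j‖ ^ 2 = 1 := by
      have h4 : (0:ℝ) ≤ ∑ j, ‖ξ j‖ ^ 2 := by positivity
      nlinarith [Real.sq_sqrt h4, this]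
    rw [← h3]
    congr 1
    funext j
    rw [← Complex.sq_norm]
  have hθ0 : 0 ≤ θ := le_trans (norm_nonneg _) hθA
  have hcosbound : Real.cos θ ≤ (⟪ξ, Matrix.toEuclideanLin (Matrix.diagonal w) ξ⟫ : ℂ).re := by
    rw [hre]
    calc Real.cos θ = ∑ j, Real.cos θ * Complex.normSq (ξ j) := by
          rw [← Finset.mul_sum, hsum, mul_one]
    _ ≤ ∑ j, Real.cos (lam j) * Complex.normSq (ξ j) := by
        apply Finset.sum_le_sum
        intro j _
        apply mul_le_mul_of_nonneg_right _ (Complex.normSq_nonneg _)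
        rw [← Real.cos_abs (lam j)]
        apply Real.cos_le_cos_of_nonneg_of_le_pi (abs_nonneg _)
          (by linarith [Real.pi_pos]) (le_trans (eig_abs_le A hA j) hθA)
  calc Real.cos θ ≤ (⟪φ, Matrix.toEuclideanLin (NormedSpace.exp (Complex.I • A)) φ⟫ : ℂ).re := by
        rw [hinner]; exact hcosbound
  _ ≤ ‖⟪φ, Matrix.toEuclideanLin (NormedSpace.exp (Complex.I • A)) φ⟫‖ := Complex.re_le_norm _

lemma opNorm_smul (c : ℂ) (M : Matrix (Fin d) (Fin d) ℂ) :
    opNorm (c • M) = ‖c‖ * opNorm M := by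
  unfold opNorm
  rw [map_smul, map_smul]
  exact norm_smul c (LinearMap.toContinuousLinearMap (Matrix.toEuclideanLin M) :
    EuclideanSpace ℂ (Fin d) →L[ℂ] EuclideanSpace ℂ (Fin d))

lemma D_le_sin {θ r : ℝ} (h0 : 0 ≤ θ) (h2 : θ ≤ Real.pi / 2) (hr : Real.cos θ ≤ r)
    (hr1 : r ≤ 1) : Real.sqrt (1 - r ^ 2) ≤ Real.sin θ := by
  have hc : 0 ≤ Real.cos θ := Real.cos_nonneg_of_mem_Icc ⟨by linarith [Real.pi_pos], h2⟩
  have h3 : 1 - r ^ 2 ≤ Real.sin θ ^ 2 := by nlinarith [Real.sin_sq_add_cos_sq θ]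
  calc Real.sqrt (1 - r ^ 2) ≤ Real.sqrt (Real.sin θ ^ 2) := Real.sqrt_le_sqrt h3
  _ = Real.sin θ := Real.sqrt_sq (Real.sin_nonneg_of_nonneg_of_le_pi h0 (by linarith [Real.pi_pos]))

lemma circuitState_zero {H : Fin 0 → Matrix (Fin d) (Fin d) ℂ} {ψ₀ : E} {ε : Fin 0 → ℝ} :
    circuitState H ψ₀ ε = ψ₀ := by
  unfold circuitState
  rw [List.ofFn_zero, List.prod_nil, L_one]

lemma circuitState_succ {N : ℕ} (H : Fin (N+1) → Matrix (Fin d) (Fin d) ℂ)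
    (ψ₀ : E) (ε : Fin (N+1) → ℝ) :
    circuitState H ψ₀ ε =
      Matrix.toEuclideanLin (NormedSpace.exp ((-Complex.I * (1 + (ε 0 : ℂ))) • H 0))
        (circuitState (fun i => H i.succ) ψ₀ (fun i => ε i.succ)) := by
  unfold circuitState
  rw [List.ofFn_succ, List.prod_cons, Lmul]

lemma gate_conj (t : ℝ) : starRingEnd ℂ (-Complex.I * (1 + (t : ℂ)))
    = -(-Complex.I * (1 + (t : ℂ))) := by
  simp [map_mul, Complex.conj_I, Complex.conj_ofReal]

lemma gate_unitary' {Hm : Matrix (Fin d) (Fin d) ℂ} (hH : Hm.IsHermitian) (t : ℝ) :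
    (NormedSpace.exp ((-Complex.I * (1 + (t : ℂ))) • Hm))ᴴ * NormedSpace.exp ((-Complex.I * (1 + (t : ℂ))) • Hm)
      = 1 :=
  gate_unitary hH _ (gate_conj t)

lemma circuitState_norm : ∀ {N : ℕ} (H : Fin N → Matrix (Fin d) (Fin d) ℂ),
    (∀ i, (H i).IsHermitian) → ∀ (ψ₀ : E), ‖ψ₀‖ = 1 → ∀ ε : Fin N → ℝ,
    ‖circuitState H ψ₀ ε‖ = 1
  | 0, H, hH, ψ₀, hψ₀, ε => by rw [circuitState_zero]; exact hψ₀
  | (N+1), H, hH, ψ₀, hψ₀, ε => by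
    rw [circuitState_succ, norm_L_unitary (gate_unitary' (hH 0) (ε 0))]
    exact circuitState_norm _ (fun i => hH i.succ) ψ₀ hψ₀ _

lemma aux_main : ∀ {N : ℕ} (H : Fin N → Matrix (Fin d) (Fin d) ℂ)
    (hH : ∀ i, (H i).IsHermitian) (ψ₀ : E) (hψ₀ : ‖ψ₀‖ = 1) (ε θf : Fin N → ℝ)
    (h1 : ∀ i, opNorm (H i) * |ε i| ≤ θf i) (h2 : ∀ i, θf i ≤ Real.pi / 2),
    Real.sqrt (1 - ‖⟪circuitState H ψ₀ ε, circuitState H ψ₀ 0⟫‖ ^ 2)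
      ≤ ∑ i, Real.sin (θf i)
  | 0, H, hH, ψ₀, hψ₀, ε, θf, h1, h2 => by
    rw [circuitState_zero, circuitState_zero]
    have : ⟪ψ₀, ψ₀⟫ = 1 := by
      rw [inner_self_eq_norm_sq_to_K (𝕜 := ℂ), hψ₀]; norm_num
    rw [this]
    simp
  | (N+1), H, hH, ψ₀, hψ₀, ε, θf, h1, h2 => by
    set H' : Fin N → Matrix (Fin d) (Fin d) ℂ := fun i => H i.succ with hH'
    set ε' : Fin N → ℝ := fun i => ε i.succ with hε'
    set ψ' : E := circuitState H' ψ₀ ε' with hψ'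
    set ψhat : E := circuitState H' ψ₀ 0 with hψhat
    have hH'h : ∀ i, (H' i).IsHermitian := fun i => hH i.succ
    have hψ'1 : ‖ψ'‖ = 1 := circuitState_norm H' hH'h ψ₀ hψ₀ ε'
    have hψhat1 : ‖ψhat‖ = 1 := circuitState_norm H' hH'h ψ₀ hψ₀ 0
    set U0 : Matrix (Fin d) (Fin d) ℂ := NormedSpace.exp ((-Complex.I * (1 + (ε 0 : ℂ))) • H 0) with hU0
    set V0 : Matrix (Fin d) (Fin d) ℂ :=
      NormedSpace.exp ((-Complex.I * (1 + (((0 : Fin (N+1) → ℝ) 0 : ℝ) : ℂ))) • H 0) with hV0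
    have hU0u : U0ᴴ * U0 = 1 := gate_unitary' (hH 0) (ε 0)
    have hV0u : V0ᴴ * V0 = 1 := gate_unitary' (hH 0) ((0 : Fin (N+1) → ℝ) 0)
    have ha : circuitState H ψ₀ ε = Matrix.toEuclideanLin U0 ψ' := by
      rw [circuitState_succ]
    have hc : circuitState H ψ₀ 0 = Matrix.toEuclideanLin V0 ψhat := by
      rw [circuitState_succ]
      rfl
    have hau : ‖Matrix.toEuclideanLin U0 ψ'‖ = 1 := by rw [norm_L_unitary hU0u, hψ'1]
    have hbu : ‖Matrix.toEuclideanLin U0 ψhat‖ = 1 := by rw [norm_L_unitary hU0u, hψhat1]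
    have hcu : ‖Matrix.toEuclideanLin V0 ψhat‖ = 1 := by rw [norm_L_unitary hV0u, hψhat1]
    rw [ha, hc]
    -- first leg
    have leg1 : Real.sqrt
        (1 - ‖⟪Matrix.toEuclideanLin U0 ψ', Matrix.toEuclideanLin U0 ψhat⟫‖ ^ 2)
        ≤ ∑ i : Fin N, Real.sin (θf i.succ) := by
      rw [inner_L_unitary hU0u]
      exact aux_main H' hH'h ψ₀ hψ₀ ε' (fun i => θf i.succ)
        (fun i => h1 i.succ) (fun i => h2 i.succ)
    -- second leg
    set A : Matrix (Fin d) (Fin d) ℂ := ((ε 0 : ℝ) : ℂ) • H 0 with hA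
    have hAh : A.IsHermitian := by
      rw [hA, Matrix.IsHermitian, Matrix.conjTranspose_smul, (hH 0).eq]
      congr 1
      exact Complex.conj_ofReal _
    have hbc : ⟪Matrix.toEuclideanLin U0 ψhat, Matrix.toEuclideanLin V0 ψhat⟫
        = ⟪ψhat, Matrix.toEuclideanLin (NormedSpace.exp (Complex.I • A)) ψhat⟫ := by
      rw [inner_L_left, ← Lmul]
      congr 2
      rw [hU0, hV0, exp_ct (hH 0), exp_smul_mul, hA, smul_smul]
      congr 1
      rw [gate_conj]
      simp only [Pi.zero_apply, Complex.ofReal_zero, add_zero]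
      ring
    have hopA : opNorm A ≤ θf 0 := by
      rw [hA, opNorm_smul]
      have hnr : ‖((ε 0 : ℝ) : ℂ)‖ = |ε 0| := by
        rw [Complex.norm_real, Real.norm_eq_abs]
      rw [hnr, mul_comm]
      exact h1 0
    have hθf0 : 0 ≤ θf 0 := le_trans (mul_nonneg (norm_nonneg _) (abs_nonneg _)) (h1 0)
    have hcos : Real.cos (θf 0)
        ≤ ‖⟪Matrix.toEuclideanLin U0 ψhat, Matrix.toEuclideanLin V0 ψhat⟫‖ := by
      rw [hbc]
      exact cos_le_abs_inner_exp A hAh ψhat hψhat1 (θf 0) hopA (h2 0)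
    have habs1 : ‖⟪Matrix.toEuclideanLin U0 ψhat, Matrix.toEuclideanLin V0 ψhat⟫‖
        ≤ 1 := by
      have hni := norm_inner_le_norm (𝕜 := ℂ) (Matrix.toEuclideanLin U0 ψhat)
        (Matrix.toEuclideanLin V0 ψhat)
      rwa [hbu, hcu, mul_one] at hni
    have leg2 : Real.sqrt (1 -
        ‖⟪Matrix.toEuclideanLin U0 ψhat, Matrix.toEuclideanLin V0 ψhat⟫‖ ^ 2)
        ≤ Real.sin (θf 0) := D_le_sin hθf0 (h2 0) hcos habs1
    -- combine
    have htri := D_tri (Matrix.toEuclideanLin U0 ψ') (Matrix.toEuclideanLin U0 ψhat)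
      (Matrix.toEuclideanLin V0 ψhat) hau hbu hcu
    rw [Fin.sum_univ_succ]
    have hfinal := le_trans htri (add_le_add leg1 leg2)
    calc Real.sqrt
          (1 - ‖⟪Matrix.toEuclideanLin U0 ψ', Matrix.toEuclideanLin V0 ψhat⟫‖ ^ 2)
        ≤ (∑ i : Fin N, Real.sin (θf i.succ)) + Real.sin (θf 0) := hfinal
      _ = Real.sin (θf 0) + ∑ i : Fin N, Real.sin (θf i.succ) := by ring

end Mat

/-- sine-based worst-case fidelity bound, Appendix C of the paper: if `ε̄ ≥ 0`
satisfies `‖Hᵢ‖₂·ε̄ ≤ π/2` for all `i` and `Σᵢ sin(‖Hᵢ‖₂·ε̄) ≤ 1`, then for every `ε` with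
`‖ε‖_∞ ≤ ε̄`, the fidelity between the noisy state `ψ(ε)` and the ideal state `ψ̂ = ψ(0)`
satisfies `|⟨ψ(ε), ψ̂⟩| ≥ √(1 − (Σᵢ sin(‖Hᵢ‖₂·ε̄))²)`. -/
theorem sine_based_worst_case_fidelity {d N : ℕ} (H : Fin N → Matrix (Fin d) (Fin d) ℂ)
    (hH : ∀ i, (H i).IsHermitian)
    (ψ₀ : EuclideanSpace ℂ (Fin d)) (hψ₀ : ‖ψ₀‖ = 1)
    (εbar : ℝ) (hεbar : 0 ≤ εbar)
    (hsmall : ∀ i, opNorm (H i) * εbar ≤ Real.pi / 2)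
    (hsum : ∑ i, Real.sin (opNorm (H i) * εbar) ≤ 1)
    (ε : Fin N → ℝ) (hε : ‖ε‖ ≤ εbar) :
    Real.sqrt (1 - (∑ i, Real.sin (opNorm (H i) * εbar)) ^ 2) ≤
      ‖(inner ℂ (circuitState H ψ₀ ε) (circuitState H ψ₀ 0) : ℂ)‖ := by
  have h1 : ∀ i, opNorm (H i) * |ε i| ≤ opNorm (H i) * εbar := by
    intro i
    apply mul_le_mul_of_nonneg_left _ (norm_nonneg _)
    calc |ε i| = ‖ε i‖ := (Real.norm_eq_abs _).symm
    _ ≤ ‖ε‖ := norm_le_pi_norm ε i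
    _ ≤ εbar := hε
  have key := aux_main H hH ψ₀ hψ₀ ε (fun i => opNorm (H i) * εbar) h1 hsmall
  set F : ℝ := ‖(inner ℂ (circuitState H ψ₀ ε) (circuitState H ψ₀ 0) : ℂ)‖ with hF
  set S : ℝ := ∑ i, Real.sin (opNorm (H i) * εbar) with hS
  have hF0 : 0 ≤ F := norm_nonneg _
  have hF1 : F ≤ 1 := by
    have hni := norm_inner_le_norm (𝕜 := ℂ) (circuitState H ψ₀ ε) (circuitState H ψ₀ 0)
    rwa [circuitState_norm H hH ψ₀ hψ₀ ε, circuitState_norm H hH ψ₀ hψ₀ 0, mul_one] at hni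
  have hS0 : 0 ≤ S := by
    apply Finset.sum_nonneg
    intro i _
    apply Real.sin_nonneg_of_nonneg_of_le_pi (mul_nonneg (norm_nonneg _) hεbar)
    have hsm := hsmall i
    unfold opNorm at hsm
    linarith [Real.pi_pos]
  have h1F : 0 ≤ 1 - F ^ 2 := by nlinarith
  have hsq : 1 - F ^ 2 ≤ S ^ 2 := by
    have h3 := pow_le_pow_left₀ (Real.sqrt_nonneg (1 - F ^ 2)) key 2
    rwa [Real.sq_sqrt h1F] at h3
  calc Real.sqrt (1 - S ^ 2) ≤ Real.sqrt (F ^ 2) := Real.sqrt_le_sqrt (by linarith)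
  _ = F := Real.sqrt_sq hF0
end

section
/- Let H₁, …, H_N be d×d complex Hermitian matrices, let φ₁, …, φ_N be real numbers, let ψ₀ ∈ ℂ^d be a unit vector, and for ε ∈ ℝ^N define ψ(ε) = exp(−i(1+ε₁)H₁)···exp(−i(1+ε_N)H_N)·ψ₀, with ideal state ψ̂ = ψ(0). Then for any ε̄ ≥ 0 and any ε ∈ ℝ^N with ‖ε‖_∞ ≤ ε̄: |⟨ψ(ε), ψ̂⟩| ≥ 1 − (Σ_{i=1}^N ‖H_i + φ_i·I_d‖₂)²·ε̄²/2, where I_d is the d×d identity matrix. -/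
set_option maxHeartbeats 2000000
set_option synthInstance.maxHeartbeats 200000


set_option autoImplicit false

open scoped Matrix

section Aux

set_option maxHeartbeats 1000000

open NormedSpace
open scoped Matrix.Norms.L2Operator

/-- Abbreviation for the endomorphism algebra of `EuclideanSpace ℂ (Fin d)`. -/
noncomputable abbrev CircuitE (d : ℕ) := EuclideanSpace ℂ (Fin d) →L[ℂ] EuclideanSpace ℂ (Fin d)

noncomputable instance circuitE_normedAlgebraRat (d : ℕ) : NormedAlgebra ℚ (CircuitE d) :=
  NormedAlgebra.restrictScalars ℚ ℂ _

noncomputable instance circuit_matrix_normedAlgebraRat (d : ℕ) :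
    NormedAlgebra ℚ (Matrix (Fin d) (Fin d) ℂ) :=
  NormedAlgebra.restrictScalars ℚ ℂ _

lemma circuit_opNorm_eq {d : ℕ} (A : Matrix (Fin d) (Fin d) ℂ) :
    opNorm A = ‖Matrix.toEuclideanCLM (𝕜 := ℂ) A‖ := rfl

lemma circuit_exp_skew_unitary {d : ℕ} {A : CircuitE d} (hA : IsSelfAdjoint A) {μ : ℂ}
    (hμ : (starRingEnd ℂ) μ = -μ) : exp (μ • A) ∈ unitary (CircuitE d) := by
  apply exp_mem_unitary_of_mem_skewAdjoint
  rw [skewAdjoint.mem_iff, star_smul, hA.star_eq, RCLike.star_def, hμ]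
  exact neg_smul μ A

lemma circuit_unitary_norm_apply {d : ℕ} {u : CircuitE d} (hu : u ∈ unitary (CircuitE d))
    (x : EuclideanSpace ℂ (Fin d)) : ‖u x‖ = ‖x‖ := by
  have h1 : (star u * u) x = x := by rw [Unitary.star_mul_self_of_mem hu]; rfl
  have key : (inner ℂ (u x) (u x) : ℂ) = inner ℂ x x := by
    calc (inner ℂ (u x) (u x) : ℂ) = inner ℂ ((ContinuousLinearMap.adjoint u) (u x)) x := by
          rw [ContinuousLinearMap.adjoint_inner_left]
      _ = inner ℂ x x := by
          rw [← ContinuousLinearMap.star_eq_adjoint]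
          rw [show (star u) (u x) = (star u * u) x from rfl, h1]
  have h4 : ‖u x‖ ^ 2 = ‖x‖ ^ 2 := by
    have h := congrArg (RCLike.re (K := ℂ)) key
    rwa [inner_self_eq_norm_sq, inner_self_eq_norm_sq] at h
  rw [← Real.sqrt_sq (norm_nonneg (u x)), ← Real.sqrt_sq (norm_nonneg x), h4]

lemma circuit_unitary_norm_le_one {d : ℕ} {u : CircuitE d} (hu : u ∈ unitary (CircuitE d)) :
    ‖u‖ ≤ 1 :=
  u.opNorm_le_bound zero_le_one (fun x => by rw [circuit_unitary_norm_apply hu, one_mul])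

lemma circuit_exp_diff_bound {d : ℕ} {A : CircuitE d} (hA : IsSelfAdjoint A) (t : ℝ) :
    ‖exp ((-Complex.I * (1 + (t : ℂ))) • A) - exp ((-Complex.I) • A)‖ ≤ |t| * ‖A‖ := by
  have hsmul : ∀ s : ℝ, s • ((-Complex.I) • A) = (-Complex.I * (s : ℂ)) • A := by
    intro s
    match_scalars
    simp [Complex.coe_algebraMap, mul_comm]
  have hfun : ∀ s : ℝ, exp ((-Complex.I * (1 + (s : ℂ))) • A)
      = exp ((-Complex.I) • A) * exp (s • ((-Complex.I) • A)) := by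
    intro s
    have h1 : (-Complex.I * (1 + (s : ℂ))) • A
        = (-Complex.I) • A + s • ((-Complex.I) • A) := by
      rw [hsmul]; module
    have hcomm : Commute ((-Complex.I) • A) (s • ((-Complex.I) • A)) := by
      rw [hsmul]; exact ((Commute.refl A).smul_left _).smul_right _
    rw [h1, exp_add_of_commute hcomm]
  have hunit1 : ‖exp ((-Complex.I) • A)‖ ≤ 1 := by
    apply circuit_unitary_norm_le_one (circuit_exp_skew_unitary hA ?_)
    simp [Complex.ext_iff]
  have hunit : ∀ s : ℝ, ‖(exp (s • ((-Complex.I) • A)) : CircuitE d)‖ ≤ 1 := by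
    intro s
    rw [hsmul]
    apply circuit_unitary_norm_le_one (circuit_exp_skew_unitary hA ?_)
    simp [Complex.ext_iff]
  have hBnorm : ‖(-Complex.I) • A‖ = ‖A‖ := by
    have h : ‖(-Complex.I) • A‖ = ‖(-Complex.I)‖ * ‖A‖ :=
      norm_smul (α := ℂ) (β := CircuitE d) _ _
    rw [h, norm_neg, Complex.norm_I, one_mul]
  have hderiv : ∀ s : ℝ,
      HasDerivAt (fun u : ℝ => exp ((-Complex.I) • A) * exp (u • ((-Complex.I) • A)))
      (exp ((-Complex.I) • A) * (exp (s • ((-Complex.I) • A)) * ((-Complex.I) • A))) s :=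
    fun s => (hasDerivAt_exp_smul_const ((-Complex.I) • A) s).const_mul (exp ((-Complex.I) • A))
  have hbound : ∀ s : ℝ,
      ‖exp ((-Complex.I) • A) * (exp (s • ((-Complex.I) • A)) * ((-Complex.I) • A))‖ ≤ ‖A‖ := by
    intro s
    calc ‖exp ((-Complex.I) • A) * (exp (s • ((-Complex.I) • A)) * ((-Complex.I) • A))‖
        ≤ ‖exp ((-Complex.I) • A)‖ * ‖exp (s • ((-Complex.I) • A)) * ((-Complex.I) • A)‖ :=
          norm_mul_le _ _
      _ ≤ 1 * (1 * ‖(-Complex.I) • A‖) := by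
          apply mul_le_mul hunit1 ?_ (norm_nonneg _) zero_le_one
          calc ‖exp (s • ((-Complex.I) • A)) * ((-Complex.I) • A)‖
              ≤ ‖(exp (s • ((-Complex.I) • A)) : CircuitE d)‖ * ‖(-Complex.I) • A‖ :=
                norm_mul_le _ _
            _ ≤ 1 * ‖(-Complex.I) • A‖ :=
                mul_le_mul_of_nonneg_right (hunit s) (norm_nonneg _)
      _ = ‖A‖ := by rw [hBnorm]; ring
  have key := Convex.norm_image_sub_le_of_norm_hasDerivWithin_le
    (f := fun u : ℝ => exp ((-Complex.I) • A) * exp (u • ((-Complex.I) • A)))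
    (f' := fun s => exp ((-Complex.I) • A) * (exp (s • ((-Complex.I) • A)) * ((-Complex.I) • A)))
    (C := ‖A‖)
    (fun s _ => (hderiv s).hasDerivWithinAt) (fun s _ => hbound s) convex_univ
    (Set.mem_univ 0) (Set.mem_univ t)
  rw [hfun t]
  have h0 : (exp ((0:ℝ) • ((-Complex.I) • A)) : CircuitE d) = 1 := by
    have hz : ((0:ℝ) • ((-Complex.I) • A) : CircuitE d) = 0 := by module
    rw [hz, exp_zero]
  simp only [h0, mul_one, sub_zero, Real.norm_eq_abs] at key
  calc ‖exp ((-Complex.I) • A) * exp (t • ((-Complex.I) • A)) - exp ((-Complex.I) • A)‖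
      ≤ ‖A‖ * |t| := key
    _ = |t| * ‖A‖ := mul_comm _ _

lemma circuit_prod_norm_apply {d : ℕ} : ∀ {N : ℕ} (u : Fin N → CircuitE d),
    (∀ i, u i ∈ unitary (CircuitE d)) → ∀ x, ‖(List.ofFn u).prod x‖ = ‖x‖ := by
  intro N
  induction N with
  | zero => intro u _ x; simp
  | succ n ih =>
    intro u hu x
    rw [List.ofFn_succ, List.prod_cons, ContinuousLinearMap.mul_apply,
      circuit_unitary_norm_apply (hu 0), ih _ (fun i => hu i.succ)]

lemma circuit_prod_diff_bound {d : ℕ} : ∀ {N : ℕ} (u v : Fin N → CircuitE d),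
    (∀ i, u i ∈ unitary (CircuitE d)) → (∀ i, v i ∈ unitary (CircuitE d)) →
    ∀ x, ‖(List.ofFn u).prod x - (List.ofFn v).prod x‖ ≤ (∑ i, ‖u i - v i‖) * ‖x‖ := by
  intro N
  induction N with
  | zero =>
    intro u v _ _ x
    simp only [List.ofFn_zero, List.prod_nil, sub_self, norm_zero, Finset.univ_eq_empty,
      Finset.sum_empty, zero_mul, le_refl]
  | succ n ih =>
    intro u v hu hv x
    rw [List.ofFn_succ, List.ofFn_succ, List.prod_cons, List.prod_cons,
      ContinuousLinearMap.mul_apply, ContinuousLinearMap.mul_apply]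
    have hP := ih (fun i => u i.succ) (fun i => v i.succ)
      (fun i => hu i.succ) (fun i => hv i.succ) x
    have hQ := circuit_prod_norm_apply (fun i => v i.succ) (fun i => hv i.succ) x
    set P : CircuitE d := (List.ofFn fun i : Fin n => u i.succ).prod with hPdef
    set Q : CircuitE d := (List.ofFn fun i : Fin n => v i.succ).prod with hQdef
    have step : u 0 (P x) - v 0 (Q x) = u 0 (P x - Q x) + (u 0 - v 0) (Q x) := by
      simp only [map_sub, ContinuousLinearMap.sub_apply]
      abel
    rw [step]
    calc ‖u 0 (P x - Q x) + (u 0 - v 0) (Q x)‖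
        ≤ ‖u 0 (P x - Q x)‖ + ‖(u 0 - v 0) (Q x)‖ := norm_add_le _ _
      _ ≤ (∑ i : Fin n, ‖u i.succ - v i.succ‖) * ‖x‖ + ‖u 0 - v 0‖ * ‖x‖ := by
          apply add_le_add
          · rw [circuit_unitary_norm_apply (hu 0)]
            exact hP
          · calc ‖(u 0 - v 0) (Q x)‖ ≤ ‖u 0 - v 0‖ * ‖Q x‖ :=
                  ContinuousLinearMap.le_opNorm _ _
              _ = ‖u 0 - v 0‖ * ‖x‖ := by rw [hQ]
      _ = (∑ i, ‖u i - v i‖) * ‖x‖ := by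
          rw [Fin.sum_univ_succ]; ring

lemma circuit_ofFn_smul_prod {d : ℕ} : ∀ {N : ℕ} (c : Fin N → ℂ) (u : Fin N → CircuitE d),
    (List.ofFn fun i => c i • u i).prod = (∏ i, c i) • (List.ofFn u).prod := by
  intro N
  induction N with
  | zero => intro c u; simp
  | succ n ih =>
    intro c u
    rw [List.ofFn_succ, List.ofFn_succ, List.prod_cons, List.prod_cons,
      ih (fun i => c i.succ) (fun i => u i.succ), Fin.prod_univ_succ,
      smul_mul_assoc, mul_smul_comm, smul_smul]

lemma circuit_exp_phase {d : ℕ} (Bop : CircuitE d) (μ z : ℂ) :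
    exp (μ • (Bop + z • 1)) = Complex.exp (μ * z) • exp (μ • Bop) := by
  have h1 : μ • (Bop + z • 1) = μ • Bop + algebraMap ℂ (CircuitE d) (μ * z) := by
    rw [Algebra.algebraMap_eq_smul_one]
    module
  rw [h1, exp_add_of_commute ((Algebra.commutes (μ * z) (μ • Bop)).symm),
    ← algebraMap_exp_comm, Complex.exp_eq_exp_ℂ, Algebra.algebraMap_eq_smul_one,
    mul_smul_comm, mul_one]

lemma circuitState_eq {d N : ℕ} (H : Fin N → Matrix (Fin d) (Fin d) ℂ)
    (ψ₀ : EuclideanSpace ℂ (Fin d)) (ε : Fin N → ℝ) :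
    circuitState H ψ₀ ε = (List.ofFn fun i =>
      exp ((-Complex.I * (1 + (ε i : ℂ))) • Matrix.toEuclideanCLM (𝕜 := ℂ) (H i))).prod ψ₀ := by
  unfold circuitState
  have h1 : Matrix.toEuclideanLin
      (List.ofFn fun i => exp ((-Complex.I * (1 + (ε i : ℂ))) • H i)).prod ψ₀
      = Matrix.toEuclideanCLM (𝕜 := ℂ)
        (List.ofFn fun i => exp ((-Complex.I * (1 + (ε i : ℂ))) • H i)).prod ψ₀ := rfl
  have h2 : Matrix.toEuclideanCLM (𝕜 := ℂ)
      (List.ofFn fun i => exp ((-Complex.I * (1 + (ε i : ℂ))) • H i)).prod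
      = ((List.ofFn fun i => exp ((-Complex.I * (1 + (ε i : ℂ))) • H i)).map
          (Matrix.toEuclideanCLM (𝕜 := ℂ))).prod :=
    map_list_prod (Matrix.toEuclideanCLM (𝕜 := ℂ)).toRingEquiv _
  have h3 : ∀ i : Fin N, Matrix.toEuclideanCLM (𝕜 := ℂ)
      (exp ((-Complex.I * (1 + (ε i : ℂ))) • H i))
      = exp ((-Complex.I * (1 + (ε i : ℂ))) • Matrix.toEuclideanCLM (𝕜 := ℂ) (H i)) := by
    intro i
    exact (map_exp (Matrix.toEuclideanCLM (𝕜 := ℂ)).toRingEquiv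
      (AddMonoidHomClass.isometry_of_norm _ (fun A => rfl)).continuous _).trans
      (congrArg exp (map_smul (Matrix.toEuclideanCLM (𝕜 := ℂ)) _ (H i)))
  rw [h1, h2, List.map_ofFn]
  exact congrArg (fun l : List (CircuitE d) => l.prod ψ₀)
    (by rw [show ((Matrix.toEuclideanCLM (𝕜 := ℂ)) ∘ fun i =>
        exp ((-Complex.I * (1 + (ε i : ℂ))) • H i))
        = fun i => exp ((-Complex.I * (1 + (ε i : ℂ))) • Matrix.toEuclideanCLM (𝕜 := ℂ) (H i))
      from funext fun i => h3 i])

end Aux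

/-- Remark 1 of the paper: since replacing `Hᵢ` by `Hᵢ + φᵢ·I` changes each
gate only by a global phase, the worst-case fidelity bound of Theorem 2 holds with `Hᵢ`
replaced by `Hᵢ + φᵢ·I` for any real numbers `φᵢ`: for any `ε̄ ≥ 0` and any `ε` with
`‖ε‖_∞ ≤ ε̄`, `|⟨ψ(ε), ψ̂⟩| ≥ 1 − (Σᵢ ‖Hᵢ + φᵢ·I‖₂)²·ε̄²/2`. -/
theorem circuit_worst_case_fidelity_phase_shift {d N : ℕ}
    (H : Fin N → Matrix (Fin d) (Fin d) ℂ) (hH : ∀ i, (H i).IsHermitian)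
    (φ : Fin N → ℝ)
    (ψ₀ : EuclideanSpace ℂ (Fin d)) (hψ₀ : ‖ψ₀‖ = 1)
    (εbar : ℝ) (hεbar : 0 ≤ εbar) (ε : Fin N → ℝ) (hε : ‖ε‖ ≤ εbar) :
    1 - (∑ i, opNorm (H i + (φ i : ℂ) • (1 : Matrix (Fin d) (Fin d) ℂ))) ^ 2 * εbar ^ 2 / 2 ≤
      ‖(inner ℂ (circuitState H ψ₀ ε) (circuitState H ψ₀ 0) : ℂ)‖ := by
  classical
  set B : Fin N → CircuitE d := fun i => Matrix.toEuclideanCLM (𝕜 := ℂ) (H i) with hBdef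
  set A : Fin N → CircuitE d := fun i => B i + (φ i : ℂ) • 1 with hAdef
  set S : ℝ := ∑ i, opNorm (H i + (φ i : ℂ) • (1 : Matrix (Fin d) (Fin d) ℂ)) with hSdef
  have hA : ∀ i, IsSelfAdjoint (A i) := by
    intro i
    have hB : IsSelfAdjoint (B i) := by
      rw [IsSelfAdjoint, hBdef, ← map_star]
      exact congrArg _ (hH i)
    apply IsSelfAdjoint.add (R := CircuitE d) hB
    rw [IsSelfAdjoint, star_smul, star_one, RCLike.star_def, Complex.conj_ofReal]
  have hAnorm : ∀ i, ‖A i‖ = opNorm (H i + (φ i : ℂ) • (1 : Matrix (Fin d) (Fin d) ℂ)) := by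
    intro i
    rw [circuit_opNorm_eq, map_add, map_smul, map_one]
  -- the gates for the shifted Hamiltonians
  set uK : Fin N → CircuitE d := fun i =>
    NormedSpace.exp ((-Complex.I * (1 + (ε i : ℂ))) • A i) with huKdef
  set vK : Fin N → CircuitE d := fun i =>
    NormedSpace.exp ((-Complex.I) • A i) with hvKdef
  have hskew : ∀ t : ℝ, (starRingEnd ℂ) (-Complex.I * (1 + (t : ℂ))) =
      -(-Complex.I * (1 + (t : ℂ))) := by
    intro t; simp [Complex.ext_iff]
  have hskew0 : (starRingEnd ℂ) (-Complex.I) = -(-Complex.I) := by simp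
  have huunit : ∀ i, uK i ∈ unitary (CircuitE d) :=
    fun i => circuit_exp_skew_unitary (hA i) (hskew (ε i))
  have hvunit : ∀ i, vK i ∈ unitary (CircuitE d) :=
    fun i => circuit_exp_skew_unitary (hA i) hskew0
  set ψ : EuclideanSpace ℂ (Fin d) := (List.ofFn uK).prod ψ₀ with hψdef
  set χ : EuclideanSpace ℂ (Fin d) := (List.ofFn vK).prod ψ₀ with hχdef
  have hψnorm : ‖ψ‖ = 1 := by
    rw [hψdef, circuit_prod_norm_apply uK huunit ψ₀, hψ₀]
  have hχnorm : ‖χ‖ = 1 := by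
    rw [hχdef, circuit_prod_norm_apply vK hvunit ψ₀, hψ₀]
  have hSnonneg : 0 ≤ S := by
    rw [hSdef]
    apply Finset.sum_nonneg
    intro i _
    rw [← hAnorm i]; exact norm_nonneg _
  -- distance bound
  have hdist : ‖ψ - χ‖ ≤ S * εbar := by
    have h1 := circuit_prod_diff_bound uK vK huunit hvunit ψ₀
    rw [hψ₀, mul_one] at h1
    refine h1.trans ?_
    have h2 : ∀ i, ‖uK i - vK i‖ ≤ εbar * ‖A i‖ := by
      intro i
      refine (circuit_exp_diff_bound (hA i) (ε i)).trans ?_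
      apply mul_le_mul_of_nonneg_right ?_ (norm_nonneg _)
      calc |ε i| = ‖ε i‖ := (Real.norm_eq_abs _).symm
        _ ≤ ‖ε‖ := norm_le_pi_norm ε i
        _ ≤ εbar := hε
    calc ∑ i, ‖uK i - vK i‖ ≤ ∑ i, εbar * ‖A i‖ :=
          Finset.sum_le_sum (fun i _ => h2 i)
      _ = S * εbar := by
          rw [← Finset.mul_sum, mul_comm]
          congr 1
          rw [hSdef]
          exact Finset.sum_congr rfl (fun i _ => hAnorm i)
  -- fidelity bound for the shifted states
  have hre : RCLike.re (inner ℂ ψ χ : ℂ) ≤ ‖(inner ℂ ψ χ : ℂ)‖ := Complex.re_le_norm _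
  have hsub : ‖ψ - χ‖ ^ 2 = ‖ψ‖ ^ 2 - 2 * RCLike.re (inner ℂ ψ χ : ℂ) + ‖χ‖ ^ 2 :=
    norm_sub_sq (𝕜 := ℂ) ψ χ
  -- relate to the original states via global phases
  have hphase : ∀ (μ : ℂ) (i : Fin N),
      NormedSpace.exp (μ • A i) = Complex.exp (μ * (φ i : ℂ)) • NormedSpace.exp (μ • B i) :=
    fun μ i => circuit_exp_phase (B i) μ (φ i)
  have hψeq : ψ = (∏ i, Complex.exp (-Complex.I * (1 + (ε i : ℂ)) * (φ i : ℂ))) •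
      circuitState H ψ₀ ε := by
    rw [hψdef, huKdef]
    have : (List.ofFn fun i => NormedSpace.exp ((-Complex.I * (1 + (ε i : ℂ))) • A i))
        = List.ofFn fun i => Complex.exp (-Complex.I * (1 + (ε i : ℂ)) * (φ i : ℂ)) •
            NormedSpace.exp ((-Complex.I * (1 + (ε i : ℂ))) • B i) := by
      congr 1
      funext i
      exact hphase _ i
    rw [this, circuit_ofFn_smul_prod, circuitState_eq, ContinuousLinearMap.smul_apply]
  have hχeq : χ = (∏ i, Complex.exp (-Complex.I * (φ i : ℂ))) • circuitState H ψ₀ 0 := by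
    rw [hχdef, hvKdef]
    have h4 : (List.ofFn fun i => NormedSpace.exp ((-Complex.I) • A i))
        = List.ofFn fun i => Complex.exp (-Complex.I * (φ i : ℂ)) •
            NormedSpace.exp ((-Complex.I) • B i) := by
      congr 1
      funext i
      exact hphase _ i
    have h5 : circuitState H ψ₀ 0
        = (List.ofFn fun i => NormedSpace.exp ((-Complex.I) • B i)).prod ψ₀ := by
      rw [circuitState_eq]
      norm_num
      rfl
    rw [h4, circuit_ofFn_smul_prod, h5, ContinuousLinearMap.smul_apply]
  have habs1 : ∀ (t r : ℝ), ‖(Complex.exp (-Complex.I * (1 + (t : ℂ)) * (r : ℂ)))‖ = 1 := by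
    intro t r
    rw [Complex.norm_exp]
    norm_num [Complex.mul_re, Complex.mul_im]
  have habs2 : ∀ r : ℝ, ‖(Complex.exp (-Complex.I * (r : ℂ)))‖ = 1 := by
    intro r
    rw [Complex.norm_exp]
    norm_num [Complex.mul_re]
  have habseq : ‖(inner ℂ ψ χ : ℂ)‖
      = ‖(inner ℂ (circuitState H ψ₀ ε) (circuitState H ψ₀ 0) : ℂ)‖ := by
    rw [hψeq, hχeq, inner_smul_left, inner_smul_right, norm_mul, norm_mul, Complex.norm_conj,
      Complex.norm_prod, Complex.norm_prod]
    have e1 : ∀ i : Fin N, i ∈ Finset.univ →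
        ‖(Complex.exp (-Complex.I * (1 + (ε i : ℂ)) * (φ i : ℂ)))‖ = 1 :=
      fun i _ => habs1 (ε i) (φ i)
    have e2 : ∀ i : Fin N, i ∈ Finset.univ →
        ‖(Complex.exp (-Complex.I * (φ i : ℂ)))‖ = 1 :=
      fun i _ => habs2 (φ i)
    rw [Finset.prod_congr rfl e1, Finset.prod_congr rfl e2]
    simp
  rw [← habseq]
  have h6 : ‖ψ - χ‖ ^ 2 ≤ (S * εbar) ^ 2 := by
    apply pow_le_pow_left₀ (norm_nonneg _) hdist
  nlinarith [hre, hsub, h6, hψnorm, hχnorm]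
end
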